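/- arXiv:1704.07016 — 4 statements merged into one kernel-verified Lean document; each statement's English description precedes it below -/
import Mathlib

section
/- In the pLSI topic model, let Π = [diag(ξ_1)]^{-1} M_0^{-1/2} A · diag(V_1) ∈ R^{p×K}. Then each row π_j' of Π is a weight vector (nonnegative entries summing to 1), and R = Π V*. Consequently, each row r_j of R is the convex combination r_j = Σ_{k=1}^K π_j(k) v_k* of the rows v_1*, …, v_K* of V*, so r_j lies in the simplex with vertices v_1*, …, v_K*; moreover, if word j is an anchor word for topic k (i.e., row j of A has exactly one nonzero entry, located in column k), then r_j = v_k*. -/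
noncomputable section
open Filter MeasureTheory ProbabilityTheory Matrix Finset Real
open scoped Classical

namespace TopicModel

/-- Euclidean norm of a vector given by a function. -/
def enorm {m : Type*} [Fintype m] (x : m → ℝ) : ℝ := Real.sqrt (∑ i, (x i) ^ 2)

/-- ℓ¹-norm of a vector given by a function. -/
def l1norm {m : Type*} [Fintype m] (x : m → ℝ) : ℝ := ∑ i, |x i|

/-- A probability (weight) vector: nonnegative entries summing to 1. -/
def IsProbVec {m : Type*} [Fintype m] (v : m → ℝ) : Prop :=
  (∀ i, 0 ≤ v i) ∧ ∑ i, v i = 1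

/-- All columns of a matrix are probability vectors. -/
def ColsProb {p K : ℕ} (A : Matrix (Fin p) (Fin K) ℝ) : Prop :=
  ∀ k, IsProbVec fun j => A j k

/-- `h_j`: the ℓ¹ norm of the j-th row of `A`. -/
def rowL1 {p K : ℕ} (A : Matrix (Fin p) (Fin K) ℝ) (j : Fin p) : ℝ := ∑ k, |A j k|

/-- The diagonal of `diag(n⁻¹ D 1_n)`. -/
def diagAvg {p n : ℕ} (D : Matrix (Fin p) (Fin n) ℝ) (j : Fin p) : ℝ :=
  (n : ℝ)⁻¹ * ∑ i, D j i

/-- `M^{-1/2} D` for a diagonal normalization `Mdg`. -/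
def nrm {p n : ℕ} (D : Matrix (Fin p) (Fin n) ℝ) (Mdg : Fin p → ℝ) :
    Matrix (Fin p) (Fin n) ℝ :=
  Matrix.of fun j i => (Real.sqrt (Mdg j))⁻¹ * D j i

/-- Spectral norm of a (rectangular) matrix. -/
def specNorm {p n : ℕ} (B : Matrix (Fin p) (Fin n) ℝ) : ℝ :=
  ⨆ x : {x : Fin n → ℝ // ∑ i, (x i) ^ 2 ≤ 1}, enorm (B *ᵥ x.1)

/-- A family of vectors is orthonormal. -/
def OrthonormalRows {K : ℕ} {p : Type*} [Fintype p] (u : Fin K → p → ℝ) : Prop :=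
  ∀ k l, ∑ j, u k j * u l j = if k = l then (1 : ℝ) else 0

/-- `(lam k, u k)` are eigenpairs of `G`, with orthonormal eigenvectors. -/
def IsEigenPairs {p K : ℕ} (G : Matrix (Fin p) (Fin p) ℝ)
    (lam : Fin K → ℝ) (u : Fin K → Fin p → ℝ) : Prop :=
  OrthonormalRows u ∧ ∀ k, G *ᵥ u k = lam k • u k

/-- `xi` consists of the `K` leading (unit-norm) eigenvectors of `G`: the first `K`
vectors of a full orthonormal eigenbasis whose eigenvalues are in decreasing order. -/
def LeadingEigenvectors {p K : ℕ} (hKp : K ≤ p) (G : Matrix (Fin p) (Fin p) ℝ)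
    (xi : Fin K → Fin p → ℝ) : Prop :=
  ∃ (lam : Fin p → ℝ) (u : Fin p → Fin p → ℝ),
    IsEigenPairs G lam u ∧ Antitone lam ∧ ∀ k : Fin K, xi k = u (Fin.castLE hKp k)

/-- `xi` consists of the `K` leading left singular vectors of `B`,
i.e. the `K` leading eigenvectors of `B Bᵀ`. -/
def LeadingLeftSingVecs {p n K : ℕ} (hKp : K ≤ p) (B : Matrix (Fin p) (Fin n) ℝ)
    (xi : Fin K → Fin p → ℝ) : Prop :=
  LeadingEigenvectors hKp (B * Bᵀ) xi

/-- `λ_min(S) ≥ c`, expressed through the quadratic form. -/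
def lamMinGe {K : ℕ} (S : Matrix (Fin K) (Fin K) ℝ) (c : ℝ) : Prop :=
  ∀ x : Fin K → ℝ, c * ∑ k, (x k) ^ 2 ≤ x ⬝ᵥ (S *ᵥ x)

/-- The topic-topic concurrence matrix `Σ_W = n⁻¹ W W'`. -/
def SigmaW {K n : ℕ} (W : Matrix (Fin K) (Fin n) ℝ) : Matrix (Fin K) (Fin K) ℝ :=
  (n : ℝ)⁻¹ • (W * Wᵀ)

/-- The topic-topic correlation matrix `Σ_A = A' H⁻¹ A`. -/
def SigmaA {p K : ℕ} (A : Matrix (Fin p) (Fin K) ℝ) : Matrix (Fin K) (Fin K) ℝ :=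
  Aᵀ * (Matrix.diagonal fun j => (rowL1 A j)⁻¹) * A

/-- The matrix `Σ̃_A = A' M₀⁻¹ A`. -/
def SigmaAt {p K n : ℕ} (A : Matrix (Fin p) (Fin K) ℝ) (W : Matrix (Fin K) (Fin n) ℝ) :
    Matrix (Fin K) (Fin K) ℝ :=
  Aᵀ * (Matrix.diagonal fun j => (diagAvg (A * W) j)⁻¹) * A

/-- All the singular values of the square matrix `S` are pairwise at least `c` apart. -/
def SingValGapGe {K : ℕ} (S : Matrix (Fin K) (Fin K) ℝ) (c : ℝ) : Prop :=
  ∃ (s : Fin K → ℝ) (v : Fin K → Fin K → ℝ),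
    (∀ k, 0 ≤ s k) ∧ IsEigenPairs (Sᵀ * S) (fun k => (s k) ^ 2) v ∧
    ∀ k l, k ≠ l → c ≤ |s k - s l|

/-- Regularity conditions (R1)-(R2). -/
def Reg12 {p K n : ℕ} (A : Matrix (Fin p) (Fin K) ℝ) (W : Matrix (Fin K) (Fin n) ℝ)
    (c1 c2 : ℝ) : Prop :=
  ColsProb A ∧ ColsProb W ∧ (∀ j, 0 < rowL1 A j) ∧
  lamMinGe (SigmaW W) c1 ∧ lamMinGe (SigmaA A) c1 ∧
  (∀ k l, c1 ≤ SigmaA A k l) ∧ SingValGapGe (SigmaW W * SigmaAt A W) c2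

/-- `j` is an anchor word for topic `k`. -/
def IsAnchor {p K : ℕ} (A : Matrix (Fin p) (Fin K) ℝ) (j : Fin p) (k : Fin K) : Prop :=
  A j k ≠ 0 ∧ ∀ l, l ≠ k → A j l = 0

/-- Regularity condition (R3): each topic has at least `mp` anchor words, each of
frequency at least `δp`. -/
def Reg3 {p K : ℕ} (A : Matrix (Fin p) (Fin K) ℝ) (mp : ℕ) (δp : ℝ) : Prop :=
  ∀ k, (mp ≤ Set.ncard {j | IsAnchor A j k}) ∧
    ∀ j, IsAnchor A j k → δp ≤ rowL1 A j

/-- `ã_j = a_j / h_j`: the ℓ¹-normalized `j`-th row of `A`. -/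
def tildeRow {p K : ℕ} (A : Matrix (Fin p) (Fin K) ℝ) (j : Fin p) (k : Fin K) : ℝ :=
  A j k / rowL1 A j

/-- Whether `j` is a non-anchor word. -/
def NonAnchor {p K : ℕ} (A : Matrix (Fin p) (Fin K) ℝ) (j : Fin p) : Prop :=
  ¬ ∃ k, IsAnchor A j k

/-- The k-means loss `RSS_n(L)` associated with the `ã_j` of non-anchor words. -/
def RSS {p K : ℕ} (A : Matrix (Fin p) (Fin K) ℝ) (L : ℕ) : ℝ :=
  ⨅ η : Fin L → Fin K → ℝ,
    ∑ j ∈ Finset.univ.filter (fun j => NonAnchor A j),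
      ⨅ l : Fin L, ∑ k, (tildeRow A j k - η l k) ^ 2

/-- Regularity condition (R4). -/
def Reg4 {p K : ℕ} (A : Matrix (Fin p) (Fin K) ℝ) (c3 : ℝ) (L0 mp n : ℕ) : Prop :=
  (∀ j, NonAnchor A j → ∀ k : Fin K,
      c3 ≤ enorm (fun l => tildeRow A j l - if l = k then 1 else 0)) ∧
  RSS A L0 ≤ (mp : ℝ) / Real.log n

/-- The empirical word-frequency matrix `D` built from the words `X i m` of the
`n` documents (each of length `N`). -/
def empD {p n N : ℕ} (X : Fin n → Fin N → Fin p) : Matrix (Fin p) (Fin n) ℝ :=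
  Matrix.of fun j i => (N : ℝ)⁻¹ * ∑ m, if X i m = j then (1 : ℝ) else 0

/-- The pLSI sampling model: the words `X ω i m` (word `m` of document `i`) are
independent across all `(i,m)`, and word `m` of document `i` equals `j` with
probability `D0 j i`.  This is exactly the statement that the columns of the
empirical frequency matrix are independent with `N dᵢ ~ Multinomial(N, d⁰ᵢ)`. -/
def IsPLSIWords {Ω : Type*} [MeasurableSpace Ω] (μ : Measure Ω)
    {p n N : ℕ} (D0 : Matrix (Fin p) (Fin n) ℝ)
    (X : Ω → Fin n → Fin N → Fin p) : Prop :=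
  IsProbabilityMeasure μ ∧
  (∀ i m, Measurable fun ω => X ω i m) ∧
  iIndepFun (fun (im : Fin n × Fin N) ω => X ω im.1 im.2) μ ∧
  ∀ i m j, (μ {ω | X ω i m = j}).toReal = D0 j i

/-- Sign vectors (diagonal ±1 matrices). -/
def SignVec (K : ℕ) : Type := {ω : Fin K → ℝ // ∀ k, ω k = 1 ∨ ω k = -1}

instance (K : ℕ) : Nonempty (SignVec K) := ⟨⟨fun _ => 1, fun _ => Or.inl rfl⟩⟩

/-- `Δ₁(Z, D₀) = min_{Ω ∈ O_K} max_j h_j^{-1/2} ‖Ω Ξ̂_j - Ξ_j‖`. -/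
def Delta1 {p K : ℕ} (hA : Fin p → ℝ) (xihat xi : Fin K → Fin p → ℝ) : ℝ :=
  ⨅ ω : SignVec K, ⨆ j, (Real.sqrt (hA j))⁻¹ * enorm (fun k => ω.1 k * xihat k j - xi k j)

/-- `Δ₂(Z, D₀) = max_j h_j⁻¹ |M(j,j) - M₀(j,j)|`. -/
def Delta2 {p : ℕ} (hA : Fin p → ℝ) (Md M0d : Fin p → ℝ) : ℝ :=
  ⨆ j, (hA j)⁻¹ * |Md j - M0d j|

/-- The matrix of entry-wise eigen-ratios: `R(j,t) = ξ_{t+1}(j) / ξ_1(j)`. -/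
def ratioR {p K : ℕ} (xi : Fin (K + 1) → Fin p → ℝ) (j : Fin p) (t : Fin K) : ℝ :=
  xi t.succ j / xi 0 j

/-- `V*(ℓ,t) = V_{t+1}(ℓ) / V_1(ℓ)`. -/
def VstarOf {K : ℕ} (V : Matrix (Fin (K + 1)) (Fin (K + 1)) ℝ) (l : Fin (K + 1))
    (t : Fin K) : ℝ :=
  V l t.succ / V l 0

/-- The k-means objective with centers `θ`. -/
def kmeansObj {p K L : ℕ} (r : Fin p → Fin K → ℝ) (θ : Fin L → Fin K → ℝ) : ℝ :=
  ∑ j, ⨅ l : Fin L, ∑ t, (r j t - θ l t) ^ 2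

/-- Euclidean distance from `b` to the simplex with vertices `vs 0, …, vs K`. -/
def simplexDist {K : ℕ} (b : Fin K → ℝ) (vs : Fin (K + 1) → Fin K → ℝ) : ℝ :=
  ⨅ w : {w : Fin (K + 1) → ℝ // IsProbVec w},
    enorm (fun t => b t - ∑ k, w.1 k * vs k t)

/-- The max distance of a center to the simplex spanned by the selected centers. -/
def maxSimplexDist {K L : ℕ} (θ : Fin L → Fin K → ℝ) (s : Fin (K + 1) → Fin L) : ℝ :=
  ⨆ l, simplexDist (θ l) fun k => θ (s k)

/-- Specification of the two-stage Vertices Hunting algorithm: `θ` is a global optimum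
of the k-means objective with `L` clusters, and `s` selects `K+1` affinely independent
cluster centers minimizing the maximal distance of a center to their simplex. -/
def VHSpec {p K L : ℕ} (r : Fin p → Fin K → ℝ) (θ : Fin L → Fin K → ℝ)
    (s : Fin (K + 1) → Fin L) : Prop :=
  (∀ θ' : Fin L → Fin K → ℝ, kmeansObj r θ ≤ kmeansObj r θ') ∧
  Function.Injective s ∧ AffineIndependent ℝ (fun k => θ (s k)) ∧
  ∀ s' : Fin (K + 1) → Fin L, Function.Injective s' →
    AffineIndependent ℝ (fun k => θ (s' k)) →
      maxSimplexDist θ s ≤ maxSimplexDist θ s'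

/-- The barycentric-coordinates step: `π*_j` solves the linear system given by the
estimated vertices. -/
def BarySpec {p K : ℕ} (r : Fin p → Fin K → ℝ) (v : Fin (K + 1) → Fin K → ℝ)
    (pistar : Fin p → Fin (K + 1) → ℝ) : Prop :=
  ∀ j, (∑ k, pistar j k = 1) ∧ ∀ t, ∑ k, pistar j k * v k t = r j t

/-- Truncate negative entries to zero and renormalize to unit sum. -/
def truncNorm {K : ℕ} (x : Fin K → ℝ) : Fin K → ℝ :=
  fun k => max (x k) 0 / ∑ l, max (x l) 0

/-- The final Topic-SCORE output `Â`: form `Â* = M^{1/2} diag(ξ̂₁) Π̂` and normalize each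
column to unit ℓ¹-norm. -/
def AhatOf {p K : ℕ} (Ddiag : Fin p → ℝ) (xihat : Fin (K + 1) → Fin p → ℝ)
    (pihat : Fin p → Fin (K + 1) → ℝ) : Matrix (Fin p) (Fin (K + 1)) ℝ :=
  Matrix.of fun j k =>
    (Real.sqrt (Ddiag j) * xihat 0 j * pihat j k) /
      ∑ j', |Real.sqrt (Ddiag j') * xihat 0 j' * pihat j' k|

/-- Full specification of the Topic-SCORE estimator (with `t = ∞`) applied to data `D`. -/
def TopicScoreSpec {p n K L : ℕ} (hKp : K + 1 ≤ p) (D : Matrix (Fin p) (Fin n) ℝ)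
    (xihat : Fin (K + 1) → Fin p → ℝ) (θ : Fin L → Fin K → ℝ) (s : Fin (K + 1) → Fin L)
    (pistar : Fin p → Fin (K + 1) → ℝ) (Ahat : Matrix (Fin p) (Fin (K + 1)) ℝ) : Prop :=
  LeadingLeftSingVecs hKp (nrm D (diagAvg D)) xihat ∧
  VHSpec (ratioR xihat) θ s ∧
  BarySpec (ratioR xihat) (fun k => θ (s k)) pistar ∧
  Ahat = AhatOf (diagAvg D) xihat fun j => truncNorm (pistar j)

/-- The ℓ¹ estimation loss `L(Â, A)`, minimized over permutations of the topics. -/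
def TVLoss {p K : ℕ} (Ahat A : Matrix (Fin p) (Fin K) ℝ) : ℝ :=
  ⨅ κ : Equiv.Perm (Fin K), ∑ k, ∑ j, |Ahat j (κ k) - A j k|

/-- Lemma "Ideal Simplex".  In the pLSI topic model (with `K+1` topics),
let `Π = [diag(ξ₁)]⁻¹ M₀^{-1/2} A diag(V₁)`.  Then every row of `Π` is a weight vector,
`R = Π V*`, each row `r_j` of `R` is the corresponding convex combination of the rows
`v₁*, …, v_K*` of `V*` (hence lies in their simplex), and anchor rows fall exactly on
the corresponding vertex. -/
theorem statement_0
    (K : ℕ) (hK : 1 ≤ K) (c1 c2 : ℝ) (hc1 : 0 < c1) (hc1' : c1 < 1) (hc2 : 0 < c2)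
    (p n : ℕ) (hp : K + 1 ≤ p) (hn : 0 < n)
    (A : Matrix (Fin p) (Fin (K + 1)) ℝ) (W : Matrix (Fin (K + 1)) (Fin n) ℝ)
    (hreg : Reg12 A W c1 c2)
    (hanchor : ∀ k, ∃ j, IsAnchor A j k)
    (xi : Fin (K + 1) → Fin p → ℝ)
    (hxi : LeadingLeftSingVecs hp (nrm (A * W) (diagAvg (A * W))) xi)
    (hxi1pos : ∀ j, 0 < xi 0 j)
    (V : Matrix (Fin (K + 1)) (Fin (K + 1)) ℝ) (hV : IsUnit V.det)
    (hVeq : (Matrix.of fun j k => xi k j) = nrm A (diagAvg (A * W)) * V)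
    (hV1pos : ∀ k, 0 < V k 0)
    (Pi : Fin p → Fin (K + 1) → ℝ)
    (hPi : ∀ j k, Pi j k = (xi 0 j)⁻¹ * (Real.sqrt (diagAvg (A * W) j))⁻¹ * A j k * V k 0) :
    (∀ j, IsProbVec (Pi j)) ∧
    (∀ j t, ratioR xi j t = ∑ k, Pi j k * VstarOf V k t) ∧
    (∀ j, (fun t => ratioR xi j t) ∈
      convexHull ℝ (Set.range fun k => fun t => VstarOf V k t)) ∧
    (∀ j k, IsAnchor A j k → ∀ t, ratioR xi j t = VstarOf V k t) := by
  obtain ⟨hAcols, -⟩ := hreg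
  set M := diagAvg (A * W) with hM
  have hxi_eq : ∀ j k, xi k j = ∑ l, (Real.sqrt (M j))⁻¹ * A j l * V l k := by
    intro j k
    have h := congrFun (congrFun hVeq j) k
    simpa [Matrix.mul_apply, nrm, mul_assoc] using h
  have hApos : ∀ j k, 0 ≤ A j k := fun j k => (hAcols k).1 j
  have hxi0 : ∀ j, xi 0 j ≠ 0 := fun j => (hxi1pos j).ne'
  have hV0 : ∀ k, V k 0 ≠ 0 := fun k => (hV1pos k).ne'
  have hsum : ∀ j, ∑ k, Pi j k = 1 := by
    intro j
    have h1 : ∑ k, Pi j k = (xi 0 j)⁻¹ * ∑ k, (Real.sqrt (M j))⁻¹ * A j k * V k 0 := by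
      rw [Finset.mul_sum]
      refine Finset.sum_congr rfl fun k _ => ?_
      rw [hPi]; ring
    rw [h1, ← hxi_eq j 0, inv_mul_cancel₀ (hxi0 j)]
  have hnn : ∀ j k, 0 ≤ Pi j k := by
    intro j k
    rw [hPi]
    exact mul_nonneg (mul_nonneg (mul_nonneg (inv_nonneg.2 (hxi1pos j).le)
      (inv_nonneg.2 (Real.sqrt_nonneg _))) (hApos j k)) (hV1pos k).le
  have hratio : ∀ j t, ratioR xi j t = ∑ k, Pi j k * VstarOf V k t := by
    intro j t
    have h1 : ∑ k, Pi j k * VstarOf V k t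
        = (xi 0 j)⁻¹ * ∑ k, (Real.sqrt (M j))⁻¹ * A j k * V k t.succ := by
      rw [Finset.mul_sum]
      refine Finset.sum_congr rfl fun k _ => ?_
      have hc : Pi j k * VstarOf V k t
          = (xi 0 j)⁻¹ * ((Real.sqrt (M j))⁻¹ * A j k * V k t.succ) *
            (V k 0 * (V k 0)⁻¹) := by
        rw [hPi, VstarOf, div_eq_mul_inv]; ring
      rw [hc, mul_inv_cancel₀ (hV0 k), mul_one]
    rw [ratioR, h1, ← hxi_eq, div_eq_inv_mul]
  refine ⟨fun j => ⟨hnn j, hsum j⟩, hratio, ?_, ?_⟩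
  · intro j
    have hmem := Finset.centerMass_mem_convexHull (Finset.univ)
      (fun k _ => hnn j k) (by rw [hsum j]; norm_num)
      (z := fun k => fun t => VstarOf V k t) (fun k _ => Set.mem_range_self k)
    have heq : Finset.univ.centerMass (Pi j) (fun k => fun t => VstarOf V k t)
        = fun t => ratioR xi j t := by
      funext t
      rw [Finset.centerMass, hsum j]
      simp [hratio j t, Finset.sum_apply]
    rwa [heq] at hmem
  · intro j k hank t
    have hz : ∀ l, l ≠ k → Pi j l = 0 := fun l hl => by
      rw [hPi, hank.2 l hl]; ring
    have hPk : Pi j k = 1 := by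
      have h := hsum j
      rwa [Finset.sum_eq_single k (fun l _ hl => hz l hl) (by simp)] at h
    rw [hratio j t, Finset.sum_eq_single k (fun l _ hl => by rw [hz l hl]; ring)
      (by simp), hPk, one_mul]

end TopicModel
end
end

section
/- Element-wise eigenvector perturbation. Let G and G_0 be p×p real symmetric matrices, where G_0 has rank K. For 1 ≤ k ≤ K let (λ_k, u_k) be the k-th eigenpair of G_0 (λ_k the k-th eigenvalue with unit-norm eigenvector u_k), and let (λ̂_k, û_k) be the k-th eigenpair of G. Let E = G − G_0 with j-th row E_j'. Suppose for some a ∈ (0,1): min_{1≤k≤K} |λ_k| ≥ a‖G_0‖, min_{1≤k≤K−1} |λ_k − λ_{k+1}| ≥ a‖G_0‖, and ‖E‖ ≤ (a/2)‖G_0‖, where ‖·‖ is the spectral norm. Then there exist signs ω_1,…,ω_K ∈ {±1} such that for all 1 ≤ j ≤ p, max_{1≤k≤K} |ω_k û_k(j) − u_k(j)| ≤ (C(a,K)/‖G_0‖)·( ‖E‖·Σ_{ℓ=1}^K |u_ℓ(j)| + ‖E_j‖ ), where C(a,K) > 0 is a constant depending only on a and K. -/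
noncomputable section
open Filter MeasureTheory ProbabilityTheory Matrix Finset Real
open scoped Classical

namespace TopicModel

/-! ### Auxiliary lemmas for statement 5 -/

section Aux

lemma enorm_nonneg' {m : Type*} [Fintype m] (x : m → ℝ) : 0 ≤ enorm x :=
  Real.sqrt_nonneg _

lemma enorm_sq' {m : Type*} [Fintype m] (x : m → ℝ) : enorm x ^ 2 = ∑ i, x i ^ 2 :=
  Real.sq_sqrt (Finset.sum_nonneg fun _ _ => sq_nonneg _)

lemma abs_dot_le {m : Type*} [Fintype m] (x y : m → ℝ) :
    |∑ i, x i * y i| ≤ enorm x * enorm y := by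
  have h1 := Real.sum_mul_le_sqrt_mul_sqrt Finset.univ x y
  have h2 := Real.sum_mul_le_sqrt_mul_sqrt Finset.univ (fun i => - x i) y
  simp only [neg_mul, Finset.sum_neg_distrib, neg_sq] at h2
  rw [abs_le]
  constructor
  · simp only [enorm]; linarith
  · simpa only [enorm] using h1

lemma specNorm_bddAbove {p n : ℕ} (B : Matrix (Fin p) (Fin n) ℝ) :
    BddAbove (Set.range fun x : {x : Fin n → ℝ // ∑ i, (x i) ^ 2 ≤ 1} =>
      enorm (B *ᵥ x.1)) := by
  refine ⟨Real.sqrt (∑ j, ∑ i, (B j i) ^ 2), ?_⟩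
  rintro r ⟨x, rfl⟩
  refine Real.sqrt_le_sqrt (Finset.sum_le_sum fun j _ => ?_)
  have h1 : ((B *ᵥ x.1) j) ^ 2 ≤ (∑ i, (B j i) ^ 2) * ∑ i, (x.1 i) ^ 2 := by
    simpa [Matrix.mulVec, dotProduct] using
      Finset.sum_mul_sq_le_sq_mul_sq Finset.univ (fun i => B j i) x.1
  have h2 : (∑ i, (B j i) ^ 2) * ∑ i, (x.1 i) ^ 2 ≤ (∑ i, (B j i) ^ 2) * 1 :=
    mul_le_mul_of_nonneg_left x.2 (Finset.sum_nonneg fun _ _ => sq_nonneg _)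
  nlinarith

lemma specNorm_nonneg {p n : ℕ} (B : Matrix (Fin p) (Fin n) ℝ) : 0 ≤ specNorm B := by
  have h := le_ciSup (specNorm_bddAbove B) ⟨0, by simp⟩
  refine le_trans ?_ h
  simp [enorm, Matrix.mulVec_zero]

lemma enorm_mulVec_le {p n : ℕ} (B : Matrix (Fin p) (Fin n) ℝ) (x : Fin n → ℝ) :
    enorm (B *ᵥ x) ≤ specNorm B * enorm x := by
  by_cases hx : enorm x = 0
  · have hx0 : x = 0 := by
      have h0 : ∑ i, x i ^ 2 = 0 := by
        have := enorm_sq' x; rw [hx] at this; linarith [this.symm]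
      funext i
      have := (Finset.sum_eq_zero_iff_of_nonneg (fun i _ => sq_nonneg (x i))).1 h0 i
        (Finset.mem_univ i)
      exact pow_eq_zero_iff (n := 2) (by norm_num) |>.1 this
    rw [hx0]
    simp [enorm, Matrix.mulVec_zero]
  · have hx' : 0 < enorm x := lt_of_le_of_ne (enorm_nonneg' x) (Ne.symm hx)
    have hy : ∑ i, (((enorm x)⁻¹ • x) i) ^ 2 ≤ 1 := by
      have h1 : ∑ i, (((enorm x)⁻¹ • x) i) ^ 2 = ((enorm x)⁻¹) ^ 2 * ∑ i, x i ^ 2 := by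
        rw [Finset.mul_sum]; exact Finset.sum_congr rfl fun i _ => by
          simp [Pi.smul_apply, smul_eq_mul, mul_pow]
      rw [h1, ← enorm_sq' x]
      rw [inv_pow]
      rw [inv_mul_cancel₀ (by positivity)]
    have h := le_ciSup (specNorm_bddAbove B) ⟨(enorm x)⁻¹ • x, hy⟩
    simp only at h
    rw [Matrix.mulVec_smul] at h
    have henorm : enorm ((enorm x)⁻¹ • (B *ᵥ x)) = (enorm x)⁻¹ * enorm (B *ᵥ x) := by
      simp only [enorm, Pi.smul_apply, smul_eq_mul, mul_pow, ← Finset.mul_sum]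
      rw [Real.sqrt_mul (by positivity), Real.sqrt_sq (by positivity)]
    rw [henorm] at h
    have := mul_le_mul_of_nonneg_left h (le_of_lt hx')
    calc enorm (B *ᵥ x) = enorm x * ((enorm x)⁻¹ * enorm (B *ᵥ x)) := by
          field_simp
      _ ≤ enorm x * specNorm B := this
      _ = specNorm B * enorm x := mul_comm _ _

lemma quad_le {p : ℕ} (B : Matrix (Fin p) (Fin p) ℝ) (x : Fin p → ℝ) :
    |∑ j, x j * (B *ᵥ x) j| ≤ specNorm B * ∑ i, x i ^ 2 := by
  calc |∑ j, x j * (B *ᵥ x) j| ≤ enorm x * enorm (B *ᵥ x) := abs_dot_le _ _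
    _ ≤ enorm x * (specNorm B * enorm x) :=
        mul_le_mul_of_nonneg_left (enorm_mulVec_le B x) (enorm_nonneg' x)
    _ = specNorm B * (enorm x) ^ 2 := by ring
    _ = specNorm B * ∑ i, x i ^ 2 := by rw [enorm_sq']

lemma OrthonormalRows.complete {p : ℕ} {u : Fin p → Fin p → ℝ}
    (hu : OrthonormalRows u) (i j : Fin p) :
    ∑ k, u k i * u k j = if i = j then (1 : ℝ) else 0 := by
  let U : Matrix (Fin p) (Fin p) ℝ := Matrix.of fun k j => u k j
  have h1 : U * Uᵀ = 1 := by
    ext k l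
    simpa [U, Matrix.mul_apply, Matrix.one_apply] using hu k l
  have h2 : Uᵀ * U = 1 := mul_eq_one_comm.mp h1
  have h3 := congrFun (congrFun h2 i) j
  simpa [U, Matrix.mul_apply, Matrix.one_apply] using h3

lemma OrthonormalRows.expand {p : ℕ} {u : Fin p → Fin p → ℝ}
    (hu : OrthonormalRows u) (x : Fin p → ℝ) (j : Fin p) :
    ∑ k, (∑ i, u k i * x i) * u k j = x j := by
  have h1 : ∑ k, (∑ i, u k i * x i) * u k j = ∑ i, (∑ k, u k i * u k j) * x i := by
    simp_rw [Finset.sum_mul]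
    rw [Finset.sum_comm]
    exact Finset.sum_congr rfl fun i _ => Finset.sum_congr rfl fun k _ => by ring
  rw [h1]
  simp [hu.complete, Finset.sum_ite_eq']

lemma OrthonormalRows.parseval {p : ℕ} {u : Fin p → Fin p → ℝ}
    (hu : OrthonormalRows u) (x : Fin p → ℝ) :
    ∑ k, (∑ i, u k i * x i) ^ 2 = ∑ j, x j ^ 2 := by
  have h1 : ∑ j, (∑ k, (∑ i, u k i * x i) * u k j) * x j
      = ∑ k, (∑ i, u k i * x i) ^ 2 := by
    have e1 : ∀ j : Fin p, (∑ k, (∑ i, u k i * x i) * u k j) * x j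
        = ∑ k, (∑ i, u k i * x i) * (u k j * x j) := by
      intro j
      rw [Finset.sum_mul]
      exact Finset.sum_congr rfl fun k _ => mul_assoc _ _ _
    simp only [e1]
    rw [Finset.sum_comm]
    refine Finset.sum_congr rfl fun k _ => ?_
    rw [← Finset.mul_sum, sq]
  rw [← h1]
  exact Finset.sum_congr rfl fun j _ => by rw [hu.expand x j, sq]

lemma on_dot {p : ℕ} {u : Fin p → Fin p → ℝ} (hu : OrthonormalRows u)
    {ι κ : Type*} [Fintype ι] [Fintype κ] (a : ι → ℝ) (b : κ → ℝ)
    (A : ι → Fin p) (Bf : κ → Fin p) :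
    ∑ j, (∑ m, a m * u (A m) j) * (∑ m', b m' * u (Bf m') j)
      = ∑ m, ∑ m', a m * b m' * (if A m = Bf m' then (1 : ℝ) else 0) := by
  have h1 : ∀ j, (∑ m, a m * u (A m) j) * (∑ m', b m' * u (Bf m') j)
      = ∑ m, ∑ m', a m * b m' * (u (A m) j * u (Bf m') j) := by
    intro j
    rw [Finset.sum_mul]
    exact Finset.sum_congr rfl fun m _ => by
      rw [Finset.mul_sum]
      exact Finset.sum_congr rfl fun m' _ => by ring
  simp_rw [h1]
  rw [Finset.sum_comm]
  refine Finset.sum_congr rfl fun m _ => ?_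
  rw [Finset.sum_comm]
  refine Finset.sum_congr rfl fun m' _ => ?_
  rw [← Finset.mul_sum, hu (A m) (Bf m')]

lemma sum_split {p K : ℕ} (hKp : K ≤ p) (f : Fin p → ℝ) :
    ∑ l, f l = (∑ l : Fin K, f (Fin.castLE hKp l))
      + ∑ l ∈ Finset.univ.filter fun l : Fin p => K ≤ (l : ℕ), f l := by
  rw [← Finset.sum_filter_add_sum_filter_not Finset.univ (fun l : Fin p => (l : ℕ) < K) f]
  congr 1
  · have hset : Finset.univ.filter (fun l : Fin p => (l : ℕ) < K)
        = (Finset.univ : Finset (Fin K)).map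
          ⟨Fin.castLE hKp, Fin.castLE_injective hKp⟩ := by
      ext l
      simp only [Finset.mem_filter, Finset.mem_univ, true_and, Finset.mem_map,
        Function.Embedding.coeFn_mk]
      constructor
      · intro hl; exact ⟨⟨(l : ℕ), hl⟩, by ext; rfl⟩
      · rintro ⟨k, rfl⟩; exact k.2
    rw [hset, Finset.sum_map]
    rfl
  · refine Finset.sum_congr ?_ fun _ _ => rfl
    ext l
    simp [not_lt]

lemma weyl_one_sided {p : ℕ} (G G0 : Matrix (Fin p) (Fin p) ℝ)
    (lam lam0 : Fin p → ℝ) (u u0 : Fin p → Fin p → ℝ)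
    (h : IsEigenPairs G lam u) (hm : Antitone lam)
    (h0 : IsEigenPairs G0 lam0 u0) (h0m : Antitone lam0)
    (ε : ℝ) (hE : ∀ x : Fin p → ℝ, |∑ j, x j * ((G - G0) *ᵥ x) j| ≤ ε * ∑ i, x i ^ 2)
    (i : Fin p) : lam i ≤ lam0 i + ε := by
  classical
  set n := (i : ℕ) with hn
  set A : Fin n → Fin p := fun l => ⟨(l : ℕ), lt_trans l.2 i.2⟩ with hA
  set B : Fin (n + 1) → Fin p :=
    fun m => ⟨(m : ℕ), lt_of_le_of_lt (Nat.lt_succ_iff.mp m.2) i.2⟩ with hB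
  have hBinj : Function.Injective B := by
    intro m m' hmm'
    have hv : (m : ℕ) = (m' : ℕ) := by simpa [hB, Fin.ext_iff] using hmm'
    exact Fin.ext hv
  have hBle : ∀ m : Fin (n + 1), B m ≤ i := fun m => Nat.lt_succ_iff.mp m.2
  set M : Matrix (Fin n) (Fin (n + 1)) ℝ :=
    Matrix.of fun l m => ∑ j, u0 (A l) j * u (B m) j with hM
  -- a nonzero kernel vector
  obtain ⟨d, hd0, hd⟩ : ∃ d : Fin (n + 1) → ℝ, d ≠ 0 ∧ M *ᵥ d = 0 := by
    have hni : ¬ Function.Injective M.mulVecLin := by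
      intro hinj
      have h1 := LinearMap.finrank_le_finrank_of_injective hinj
      rw [Module.finrank_fin_fun, Module.finrank_fin_fun] at h1
      omega
    obtain ⟨d1, d2, hd12, hne⟩ := Function.not_injective_iff.mp hni
    refine ⟨d1 - d2, sub_ne_zero_of_ne hne, ?_⟩
    have := sub_eq_zero_of_eq hd12
    rw [← map_sub] at this
    simpa [Matrix.mulVecLin_apply] using this
  set x : Fin p → ℝ := fun j => ∑ m, d m * u (B m) j with hx
  set s : ℝ := ∑ m, d m ^ 2 with hs
  have hspos : 0 < s := by
    have h1 : ∃ m, d m ≠ 0 := by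
      by_contra hc
      push_neg at hc
      exact hd0 (funext hc)
    obtain ⟨m0, hm0⟩ := h1
    exact Finset.sum_pos' (fun m _ => sq_nonneg _)
      ⟨m0, Finset.mem_univ m0, by positivity⟩
  have hxs : ∑ j, x j ^ 2 = s := by
    have h1 : ∑ j, x j * x j = ∑ m, ∑ m', d m * d m' * (if B m = B m' then (1:ℝ) else 0) :=
      on_dot h.1 d d B B
    have h2 : ∑ j, x j ^ 2 = ∑ j, x j * x j := by simp [sq]
    rw [h2, h1]
    refine Finset.sum_congr rfl fun m _ => ?_
    have h3 : ∀ m' : Fin (n+1), (if B m = B m' then (1:ℝ) else 0)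
        = if m = m' then (1:ℝ) else 0 := fun m' => by
      by_cases hmm : m = m'
      · simp [hmm]
      · rw [if_neg hmm, if_neg fun h => hmm (hBinj h)]
    simp only [h3, mul_ite, mul_one, mul_zero]
    rw [Finset.sum_ite_eq]
    simp [sq]
  -- quadratic form of G on x
  have hGx : G *ᵥ x = fun j => ∑ m, (d m * lam (B m)) * u (B m) j := by
    funext j
    have h1 : (G *ᵥ x) j = ∑ i', G j i' * ∑ m, d m * u (B m) i' := rfl
    rw [h1]
    have h2 : ∀ i', G j i' * ∑ m, d m * u (B m) i' = ∑ m, d m * (G j i' * u (B m) i') := by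
      intro i'
      rw [Finset.mul_sum]
      exact Finset.sum_congr rfl fun m _ => by ring
    simp only [h2]
    rw [Finset.sum_comm]
    refine Finset.sum_congr rfl fun m _ => ?_
    rw [← Finset.mul_sum]
    have h3 : ∑ i', G j i' * u (B m) i' = (G *ᵥ u (B m)) j := rfl
    rw [h3, h.2 (B m)]
    simp [Pi.smul_apply, smul_eq_mul]
    ring
  have hqG : ∑ j, x j * (G *ᵥ x) j = ∑ m, lam (B m) * d m ^ 2 := by
    rw [hGx]
    have h1 := on_dot h.1 d (fun m => d m * lam (B m)) B B
    rw [h1]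
    refine Finset.sum_congr rfl fun m _ => ?_
    have h3 : ∀ m' : Fin (n+1), (if B m = B m' then (1:ℝ) else 0)
        = if m = m' then (1:ℝ) else 0 := fun m' => by
      by_cases hmm : m = m'
      · simp [hmm]
      · rw [if_neg hmm, if_neg fun h => hmm (hBinj h)]
    simp only [h3, mul_ite, mul_one, mul_zero]
    rw [Finset.sum_ite_eq]
    simp [sq]
    ring
  have hqGlb : lam i * s ≤ ∑ j, x j * (G *ᵥ x) j := by
    rw [hqG, hs, Finset.mul_sum]
    exact Finset.sum_le_sum fun m _ =>
      mul_le_mul_of_nonneg_right (hm (hBle m)) (sq_nonneg _)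
  -- quadratic form of G0 on x
  set c : Fin p → ℝ := fun l => ∑ j, u0 l j * x j with hc
  have hc0 : ∀ l : Fin p, (l : ℕ) < n → c l = 0 := by
    intro l hl
    have h1 : (M *ᵥ d) ⟨(l : ℕ), hl⟩ = 0 := by rw [hd]; rfl
    have h2 : (M *ᵥ d) ⟨(l : ℕ), hl⟩ = c l := by
      have e1 : (M *ᵥ d) ⟨(l : ℕ), hl⟩
          = ∑ m, (∑ j, u0 (A ⟨(l : ℕ), hl⟩) j * u (B m) j) * d m := rfl
      rw [e1]
      have e2 : A ⟨(l : ℕ), hl⟩ = l := Fin.ext rfl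
      rw [e2]
      have e3 : ∀ m, (∑ j, u0 l j * u (B m) j) * d m
          = ∑ j, u0 l j * (d m * u (B m) j) := by
        intro m
        rw [Finset.sum_mul]
        exact Finset.sum_congr rfl fun j _ => by ring
      simp only [e3]
      rw [Finset.sum_comm]
      exact Finset.sum_congr rfl fun j _ => by rw [← Finset.mul_sum]
    rw [← h2, h1]
  have hxexp : ∀ j, x j = ∑ l, c l * u0 l j := by
    intro j
    exact (h0.1.expand x j).symm
  have hG0x : G0 *ᵥ x = fun j => ∑ l, (c l * lam0 l) * u0 l j := by
    funext j
    have h1 : (G0 *ᵥ x) j = ∑ i', G0 j i' * x i' := rfl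
    rw [h1]
    have h2 : ∀ i', G0 j i' * x i' = ∑ l, c l * (G0 j i' * u0 l i') := by
      intro i'
      rw [hxexp i', Finset.mul_sum]
      exact Finset.sum_congr rfl fun l _ => by ring
    simp only [h2]
    rw [Finset.sum_comm]
    refine Finset.sum_congr rfl fun l _ => ?_
    rw [← Finset.mul_sum]
    have h3 : ∑ i', G0 j i' * u0 l i' = (G0 *ᵥ u0 l) j := rfl
    rw [h3, h0.2 l]
    simp [Pi.smul_apply, smul_eq_mul]
    ring
  have hqG0 : ∑ j, x j * (G0 *ᵥ x) j = ∑ l, lam0 l * c l ^ 2 := by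
    rw [hG0x]
    have h1 : ∀ j, x j * ∑ l, (c l * lam0 l) * u0 l j
        = ∑ l, (c l * lam0 l) * (u0 l j * x j) := by
      intro j
      rw [Finset.mul_sum]
      exact Finset.sum_congr rfl fun l _ => by ring
    simp only [h1]
    rw [Finset.sum_comm]
    refine Finset.sum_congr rfl fun l _ => ?_
    rw [← Finset.mul_sum]
    have h2 : ∑ j, u0 l j * x j = c l := rfl
    rw [h2]
    ring
  have hparc : ∑ l, c l ^ 2 = s := by
    rw [← hxs]
    exact h0.1.parseval x
  have hqG0ub : ∑ j, x j * (G0 *ᵥ x) j ≤ lam0 i * s := by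
    rw [hqG0, ← hparc, Finset.mul_sum]
    refine Finset.sum_le_sum fun l _ => ?_
    by_cases hl : (l : ℕ) < n
    · rw [hc0 l hl]
      simp
    · push_neg at hl
      have hil : i ≤ l := hl
      exact mul_le_mul_of_nonneg_right (h0m hil) (sq_nonneg _)
  -- combine
  have hsub : ∑ j, x j * ((G - G0) *ᵥ x) j
      = ∑ j, x j * (G *ᵥ x) j - ∑ j, x j * (G0 *ᵥ x) j := by
    rw [← Finset.sum_sub_distrib]
    refine Finset.sum_congr rfl fun j _ => ?_
    rw [Matrix.sub_mulVec]
    simp [Pi.sub_apply, mul_sub]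
  have hEx := hE x
  rw [hsub, hxs] at hEx
  have h1 : ∑ j, x j * (G *ᵥ x) j - ∑ j, x j * (G0 *ᵥ x) j ≤ ε * s := (abs_le.mp hEx).2
  have h2 : lam i * s ≤ (lam0 i + ε) * s := by nlinarith
  exact le_of_mul_le_mul_right (by linarith [h2]) hspos

lemma lam0_eq_zero {p K : ℕ} (hKp : K ≤ p) (G0 : Matrix (Fin p) (Fin p) ℝ)
    (lam0 : Fin p → ℝ) (u0 : Fin p → Fin p → ℝ)
    (h0 : IsEigenPairs G0 lam0 u0) (hrank : G0.rank = K)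
    (hnz : ∀ k : Fin K, lam0 (Fin.castLE hKp k) ≠ 0) :
    ∀ l : Fin p, K ≤ (l : ℕ) → lam0 l = 0 := by
  classical
  set U : Matrix (Fin p) (Fin p) ℝ := Matrix.of fun k j => u0 k j with hU
  have h1 : U * Uᵀ = 1 := by
    ext k l
    simpa [U, Matrix.mul_apply, Matrix.one_apply] using h0.1 k l
  have h2 : Uᵀ * U = 1 := mul_eq_one_comm.mp h1
  have h3 : G0 * Uᵀ = Uᵀ * Matrix.diagonal lam0 := by
    ext j k
    have e1 : (G0 * Uᵀ) j k = (G0 *ᵥ u0 k) j := by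
      simp [Matrix.mul_apply, Matrix.mulVec, dotProduct, U]
    rw [e1, h0.2 k]
    simp [Matrix.mul_apply, Matrix.diagonal, U, Matrix.transpose_apply]
    ring
  have hGU : G0 = Uᵀ * Matrix.diagonal lam0 * U := by
    calc G0 = G0 * (Uᵀ * U) := by rw [h2, Matrix.mul_one]
      _ = (G0 * Uᵀ) * U := by rw [Matrix.mul_assoc]
      _ = Uᵀ * Matrix.diagonal lam0 * U := by rw [h3]
  have hdetU : IsUnit U.det := Matrix.isUnit_det_of_right_inverse h1
  have hdetUt : IsUnit Uᵀ.det := by rwa [Matrix.det_transpose]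
  have hr : G0.rank = (Matrix.diagonal lam0).rank := by
    rw [hGU, Matrix.rank_mul_eq_left_of_isUnit_det U _ hdetU,
      Matrix.rank_mul_eq_right_of_isUnit_det Uᵀ _ hdetUt]
  rw [hrank, Matrix.rank_diagonal] at hr
  have hcard : (Finset.univ.filter fun l : Fin p => lam0 l ≠ 0).card = K := by
    rw [← Fintype.card_subtype]
    omega
  have hsub : (Finset.univ.filter fun l : Fin p => (l : ℕ) < K)
      ⊆ (Finset.univ.filter fun l : Fin p => lam0 l ≠ 0) := by
    intro l hl
    simp only [Finset.mem_filter, Finset.mem_univ, true_and] at hl ⊢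
    have := hnz ⟨(l : ℕ), hl⟩
    have e : Fin.castLE hKp ⟨(l : ℕ), hl⟩ = l := Fin.ext rfl
    rwa [e] at this
  have hcard2 : (Finset.univ.filter fun l : Fin p => (l : ℕ) < K).card = K := by
    have hset : Finset.univ.filter (fun l : Fin p => (l : ℕ) < K)
        = (Finset.univ : Finset (Fin K)).map
          ⟨Fin.castLE hKp, Fin.castLE_injective hKp⟩ := by
      ext l
      simp only [Finset.mem_filter, Finset.mem_univ, true_and, Finset.mem_map,
        Function.Embedding.coeFn_mk]
      constructor
      · intro hl; exact ⟨⟨(l : ℕ), hl⟩, by ext; rfl⟩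
      · rintro ⟨k, rfl⟩; exact k.2
    rw [hset, Finset.card_map]
    simp
  have heq : (Finset.univ.filter fun l : Fin p => (l : ℕ) < K)
      = (Finset.univ.filter fun l : Fin p => lam0 l ≠ 0) :=
    Finset.eq_of_subset_of_card_le hsub (by rw [hcard, hcard2])
  intro l hl
  by_contra hne
  have hmem : l ∈ Finset.univ.filter fun l : Fin p => lam0 l ≠ 0 := by
    simp [hne]
  rw [← heq] at hmem
  simp only [Finset.mem_filter, Finset.mem_univ, true_and] at hmem
  omega

end Aux

set_option maxHeartbeats 1000000 in
/-- Lemma: element-wise eigenvector perturbation. -/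
theorem statement_5 (a : ℝ) (ha0 : 0 < a) (ha1 : a < 1) (K : ℕ) :
    ∃ C : ℝ, 0 < C ∧
      ∀ (p : ℕ) (hKp : K ≤ p) (G G0 : Matrix (Fin p) (Fin p) ℝ),
        G.IsSymm → G0.IsSymm → G0.rank = K →
        ∀ (lam0 : Fin p → ℝ) (u0 : Fin p → Fin p → ℝ)
          (lam : Fin p → ℝ) (u : Fin p → Fin p → ℝ),
          IsEigenPairs G0 lam0 u0 → Antitone lam0 →
          IsEigenPairs G lam u → Antitone lam →
          (∀ k : Fin K, a * specNorm G0 ≤ |lam0 (Fin.castLE hKp k)|) →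
          (∀ k : Fin K, ∀ h : (k : ℕ) + 1 < K,
            a * specNorm G0 ≤
              |lam0 (Fin.castLE hKp k) - lam0 ⟨(k : ℕ) + 1, lt_of_lt_of_le h hKp⟩|) →
          specNorm (G - G0) ≤ (a / 2) * specNorm G0 →
          ∃ ω : Fin K → ℝ, (∀ k, ω k = 1 ∨ ω k = -1) ∧
            ∀ (j : Fin p) (k : Fin K),
              |ω k * u (Fin.castLE hKp k) j - u0 (Fin.castLE hKp k) j| ≤
                (C / specNorm G0) *
                  (specNorm (G - G0) * (∑ l : Fin K, |u0 (Fin.castLE hKp l) j|) +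
                    enorm fun i => (G - G0) j i) := by
  classical
  refine ⟨6 / a, by positivity, ?_⟩
  intro p hKp G G0 hGs hG0s hrank lam0 u0 lam u h0 h0m h hm hmag hgap hEc
  rcases Nat.eq_zero_or_pos K with hK0 | hKpos
  · subst hK0
    exact ⟨fun _ => 1, fun k => Or.inl rfl, fun j k => k.elim0⟩
  have hε0 : 0 ≤ specNorm (G - G0) := specNorm_nonneg _
  set ε := specNorm (G - G0) with hεdef
  set g0 := specNorm G0 with hg0def
  have hG0ne : G0 ≠ 0 := by
    intro hzz
    rw [hzz, Matrix.rank_zero] at hrank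
    omega
  have hg0 : 0 < g0 := by
    have hex : ∃ j i, G0 j i ≠ 0 := by
      by_contra hc
      push_neg at hc
      exact hG0ne (by ext j i; simpa using hc j i)
    obtain ⟨j0, i0, hji⟩ := hex
    have hcol : (G0 *ᵥ Pi.single i0 1) j0 = G0 j0 i0 := by
      simp [Matrix.mulVec_single]
    have h1 : |G0 j0 i0| ≤ enorm (G0 *ᵥ Pi.single i0 1) := by
      rw [← hcol, ← Real.sqrt_sq_eq_abs]
      exact Real.sqrt_le_sqrt (Finset.single_le_sum
        (f := fun j => ((G0 *ᵥ Pi.single i0 1) j) ^ 2)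
        (fun j _ => sq_nonneg _) (Finset.mem_univ j0))
    have h2 : enorm (G0 *ᵥ Pi.single i0 1) ≤ g0 * enorm (Pi.single i0 1 : Fin p → ℝ) :=
      enorm_mulVec_le _ _
    have h3 : enorm (Pi.single i0 1 : Fin p → ℝ) = 1 := by
      have e1 : ∑ i, (Pi.single i0 1 : Fin p → ℝ) i ^ 2 = 1 := by
        rw [Finset.sum_eq_single i0]
        · simp
        · intro l' _ hl'; simp [Pi.single_apply, hl']
        · intro hk; exact absurd (Finset.mem_univ i0) hk
      simp [enorm, e1]
    rw [h3, mul_one] at h2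
    have h4 := abs_pos.mpr hji
    linarith
  set b := a * g0 with hbdef
  have hb0 : 0 < b := mul_pos ha0 hg0
  have hεb : ε ≤ b / 2 := by rw [hbdef]; linarith [hEc]
  -- Weyl's inequality
  have hEquadG : ∀ x : Fin p → ℝ, |∑ j, x j * ((G - G0) *ᵥ x) j| ≤ ε * ∑ i, x i ^ 2 :=
    fun x => quad_le (G - G0) x
  have hEquadG0 : ∀ x : Fin p → ℝ, |∑ j, x j * ((G0 - G) *ᵥ x) j| ≤ ε * ∑ i, x i ^ 2 := by
    intro x
    have e1 : ∀ j, ((G0 - G) *ᵥ x) j = -(((G - G0) *ᵥ x) j) := by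
      intro j
      rw [Matrix.sub_mulVec, Matrix.sub_mulVec]
      simp
    calc |∑ j, x j * ((G0 - G) *ᵥ x) j| = |∑ j, x j * ((G - G0) *ᵥ x) j| := by
          simp only [e1, mul_neg]
          rw [Finset.sum_neg_distrib, abs_neg]
      _ ≤ _ := hEquadG x
  have hweyl : ∀ i, |lam i - lam0 i| ≤ ε := by
    intro i
    have hle := weyl_one_sided G G0 lam lam0 u u0 h hm h0 h0m ε hEquadG i
    have hge := weyl_one_sided G0 G lam0 lam u0 u h0 h0m h hm ε hEquadG0 i
    rw [abs_sub_le_iff]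
    constructor <;> linarith
  -- the non-leading eigenvalues of G0 vanish
  have hz : ∀ l : Fin p, K ≤ (l : ℕ) → lam0 l = 0 := by
    refine lam0_eq_zero hKp G0 lam0 u0 h0 hrank ?_
    intro k hk0
    have h1 := hmag k
    rw [hk0] at h1
    simp only [abs_zero] at h1
    linarith
  -- lower bound on perturbed top eigenvalues
  have hlamlb : ∀ k : Fin K, b / 2 ≤ |lam (Fin.castLE hKp k)| := by
    intro k
    have h1 := hmag k
    have h2 := hweyl (Fin.castLE hKp k)
    have h3 := abs_sub_abs_le_abs_sub (lam0 (Fin.castLE hKp k)) (lam (Fin.castLE hKp k))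
    rw [abs_sub_comm] at h3
    rw [hbdef]
    linarith
  -- gaps between eigenvalues of G0
  have hgap0 : ∀ k : Fin K, ∀ l : Fin p, l ≠ Fin.castLE hKp k → (l : ℕ) < K →
      b ≤ |lam0 (Fin.castLE hKp k) - lam0 l| := by
    intro k l hne hlK
    rcases lt_trichotomy ((k : ℕ)) ((l : ℕ)) with hkl | hkl | hkl
    · have hk1 : (k : ℕ) + 1 < K := lt_of_le_of_lt hkl hlK
      have hg := hgap k hk1
      set k1 : Fin p := ⟨(k : ℕ) + 1, lt_of_lt_of_le hk1 hKp⟩ with hk1def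
      have hmono1 : lam0 l ≤ lam0 k1 := h0m (show k1 ≤ l from hkl)
      have hmono2 : lam0 k1 ≤ lam0 (Fin.castLE hKp k) :=
        h0m (show (Fin.castLE hKp k) ≤ k1 from by simp [Fin.le_def, hk1def])
      rw [abs_of_nonneg (by linarith)] at hg
      rw [abs_of_nonneg (by linarith)]
      rw [hbdef] at hg ⊢
      linarith
    · exact absurd (Fin.ext hkl.symm) hne
    · have hkK : (k : ℕ) < K := k.2
      have hl1 : (l : ℕ) + 1 < K := lt_of_le_of_lt hkl hkK
      have hg := hgap ⟨(l : ℕ), hlK⟩ hl1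
      have he : Fin.castLE hKp ⟨(l : ℕ), hlK⟩ = l := Fin.ext rfl
      rw [he] at hg
      set l1 : Fin p := ⟨(l : ℕ) + 1, lt_of_lt_of_le hl1 hKp⟩ with hl1def
      have hmono1 : lam0 (Fin.castLE hKp k) ≤ lam0 l1 :=
        h0m (show l1 ≤ Fin.castLE hKp k from hkl)
      have hmono2 : lam0 l1 ≤ lam0 l := h0m (show l ≤ l1 from by simp [Fin.le_def, hl1def])
      rw [abs_of_nonneg (by linarith)] at hg
      rw [abs_of_nonpos (by linarith), neg_sub]
      rw [hbdef] at hg ⊢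
      linarith
  -- gaps between perturbed top eigenvalues and eigenvalues of G0
  have hgapf : ∀ k : Fin K, ∀ l : Fin p, l ≠ Fin.castLE hKp k →
      b / 2 ≤ |lam (Fin.castLE hKp k) - lam0 l| := by
    intro k l hne
    by_cases hlK : (l : ℕ) < K
    · have h1 := hgap0 k l hne hlK
      have h2 := hweyl (Fin.castLE hKp k)
      have h3 := abs_sub_le (lam0 (Fin.castLE hKp k)) (lam (Fin.castLE hKp k)) (lam0 l)
      rw [abs_sub_comm (lam0 (Fin.castLE hKp k)) (lam (Fin.castLE hKp k))] at h3
      linarith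
    · push_neg at hlK
      rw [hz l hlK, sub_zero]
      exact hlamlb k
  -- definition of the signs
  refine ⟨fun k => if 0 ≤ ∑ i', u0 (Fin.castLE hKp k) i' * u (Fin.castLE hKp k) i'
      then 1 else -1, fun k => by
        by_cases hh : (0:ℝ) ≤ ∑ i' : Fin p, u0 (Fin.castLE hKp k) i' * u (Fin.castLE hKp k) i'
        · left; simp [hh]
        · right; simp [hh], ?_⟩
  intro j k
  set kk := Fin.castLE hKp k with hkk
  set v : Fin p → ℝ := u kk with hv
  set lamh := lam kk with hlamh
  set c : Fin p → ℝ := fun l => ∑ i', u0 l i' * v i' with hcdef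
  set Ev : Fin p → ℝ := (G - G0) *ᵥ v with hEvdef
  set w : Fin p → ℝ := fun l => ∑ i', u0 l i' * Ev i' with hwdef
  set S := ∑ l : Fin K, |u0 (Fin.castLE hKp l) j| with hSdef
  set R := enorm (fun i' => (G - G0) j i') with hRdef
  have hS0 : 0 ≤ S := by
    rw [hSdef]; exact Finset.sum_nonneg fun _ _ => abs_nonneg _
  have hR0 : 0 ≤ R := enorm_nonneg' _
  have hgoalc : (∑ i', u0 kk i' * v i') = c kk := rfl
  simp only [hgoalc]
  set ωk : ℝ := if 0 ≤ c kk then 1 else -1 with hωk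
  have hω1 : ωk = 1 ∨ ωk = -1 := by rw [hωk]; split <;> simp
  have homega : ωk * c kk = |c kk| := by
    rw [hωk]
    by_cases hpos : 0 ≤ c kk
    · rw [if_pos hpos, one_mul, abs_of_nonneg hpos]
    · rw [if_neg hpos, neg_one_mul, abs_of_neg (not_le.1 hpos)]
  -- basic facts
  have hv1 : ∑ i', v i' ^ 2 = 1 := by
    have h1 := h.1 kk kk
    simp only [if_pos rfl] at h1
    calc ∑ i', v i' ^ 2 = ∑ i', v i' * v i' := by
          exact Finset.sum_congr rfl fun i' _ => sq (v i')
      _ = 1 := h1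
  have henormv : enorm v = 1 := by
    rw [enorm, hv1, Real.sqrt_one]
  have hGv : ∀ i', (G *ᵥ v) i' = lamh * v i' := by
    intro i'
    rw [show G *ᵥ v = lamh • v from h.2 kk]
    simp
  have hG0v : ∀ i', (G0 *ᵥ v) i' = lamh * v i' - Ev i' := by
    intro i'
    have e1 : Ev i' = (G *ᵥ v) i' - (G0 *ᵥ v) i' := by
      rw [hEvdef, Matrix.sub_mulVec]
      simp
    rw [e1, hGv i']
    ring
  have k1 : ∀ l, (lamh - lam0 l) * c l = w l := by
    intro l
    have e2 : ∑ i', u0 l i' * (G0 *ᵥ v) i' = lam0 l * c l := by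
      have e3 : ∀ i', u0 l i' * (G0 *ᵥ v) i' = ∑ i'', (G0 i' i'' * u0 l i') * v i'' := by
        intro i'
        have e4 : (G0 *ᵥ v) i' = ∑ i'', G0 i' i'' * v i'' := rfl
        rw [e4, Finset.mul_sum]
        exact Finset.sum_congr rfl fun i'' _ => by ring
      simp only [e3]
      rw [Finset.sum_comm]
      have e5 : ∀ i'', ∑ i', (G0 i' i'' * u0 l i') * v i'' = ((G0 *ᵥ u0 l) i'') * v i'' := by
        intro i''
        rw [← Finset.sum_mul]
        congr 1
        have e6 : (G0 *ᵥ u0 l) i'' = ∑ i', G0 i'' i' * u0 l i' := rfl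
        rw [e6]
        exact Finset.sum_congr rfl fun i' _ => by rw [hG0s.apply i'' i']
      simp only [e5]
      have e7 : ∀ i'', ((G0 *ᵥ u0 l) i'') * v i'' = lam0 l * (u0 l i'' * v i'') := by
        intro i''
        rw [show G0 *ᵥ u0 l = lam0 l • u0 l from h0.2 l]
        simp
        ring
      simp only [e7]
      rw [← Finset.mul_sum]
    have e8 : ∑ i', u0 l i' * (G0 *ᵥ v) i' = lamh * c l - w l := by
      simp only [hG0v, mul_sub]
      rw [Finset.sum_sub_distrib]
      congr 1
      have e9 : ∀ i', u0 l i' * (lamh * v i') = lamh * (u0 l i' * v i') :=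
        fun i' => by ring
      simp only [e9]
      rw [← Finset.mul_sum]
    rw [e8] at e2
    linear_combination e2
  have k2 : ∑ l, w l ^ 2 = ∑ i', Ev i' ^ 2 := h0.1.parseval Ev
  have k3 : ∑ i', Ev i' ^ 2 ≤ ε ^ 2 := by
    have h1 := enorm_mulVec_le (G - G0) v
    rw [henormv, mul_one] at h1
    have h2 : ∑ i', Ev i' ^ 2 = enorm Ev ^ 2 := (enorm_sq' Ev).symm
    rw [h2]
    exact pow_le_pow_left₀ (enorm_nonneg' _) h1 2
  have k4 : ∀ l, |w l| ≤ ε := by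
    intro l
    have h1 : w l ^ 2 ≤ ε ^ 2 := by
      refine le_trans ?_ (le_trans (le_of_eq k2) k3)
      exact Finset.single_le_sum (f := fun l => w l ^ 2)
        (fun l _ => sq_nonneg _) (Finset.mem_univ l)
    calc |w l| = Real.sqrt (w l ^ 2) := (Real.sqrt_sq_eq_abs _).symm
      _ ≤ Real.sqrt (ε ^ 2) := Real.sqrt_le_sqrt h1
      _ = ε := Real.sqrt_sq hε0
  have k5 : ∑ l, c l ^ 2 = 1 := by
    rw [show ∑ l, c l ^ 2 = ∑ i', v i' ^ 2 from h0.1.parseval v]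
    exact hv1
  have k6 : ∀ l, l ≠ kk → |c l| ≤ 2 / b * |w l| := by
    intro l hl
    have hgapl := hgapf k l (by rwa [← hkk])
    have h1 := k1 l
    have h2 : |lamh - lam0 l| * |c l| = |w l| := by rw [← abs_mul, h1]
    have hmul : b / 2 * |c l| ≤ |w l| := by
      have hint := mul_le_mul_of_nonneg_right hgapl (abs_nonneg (c l))
      linarith
    rw [show (2 : ℝ) / b * |w l| = 2 * |w l| / b by ring, le_div_iff₀ hb0]
    linarith
  have k7 : ∀ i'', v i'' = ∑ l, c l * u0 l i'' := fun i'' => (h0.1.expand v i'').symm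
  have k8 : Ev j = ∑ l, w l * u0 l j := (h0.1.expand Ev j).symm
  have k9 : |Ev j| ≤ R := by
    have e : Ev j = ∑ i', (G - G0) j i' * v i' := rfl
    rw [e]
    have h1 := abs_dot_le (fun i' => (G - G0) j i') v
    rw [henormv, mul_one] at h1
    exact h1
  -- the sum split
  set F : Fin p → ℝ := fun l => c l * u0 l j with hFdef
  set W : Fin p → ℝ := fun l => w l * u0 l j with hWdef
  have hsplitF := sum_split hKp F
  have hsplitW := sum_split hKp W
  have hWbound : |∑ l : Fin K, W (Fin.castLE hKp l)| ≤ ε * S := by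
    calc |∑ l : Fin K, W (Fin.castLE hKp l)| ≤ ∑ l : Fin K, |W (Fin.castLE hKp l)| :=
          Finset.abs_sum_le_sum_abs _ _
      _ ≤ ∑ l : Fin K, ε * |u0 (Fin.castLE hKp l) j| := by
          refine Finset.sum_le_sum fun l _ => ?_
          rw [hWdef, abs_mul]
          exact mul_le_mul_of_nonneg_right (k4 _) (abs_nonneg _)
      _ = ε * S := by rw [hSdef, Finset.mul_sum]
  -- T1 : the leading part
  have hT1 : |∑ l : Fin K, F (Fin.castLE hKp l) - F kk| ≤ 2 / b * (ε * S) := by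
    have e1 : ∑ l : Fin K, F (Fin.castLE hKp l) - F kk
        = ∑ l ∈ Finset.univ.erase k, F (Fin.castLE hKp l) := by
      rw [← Finset.add_sum_erase Finset.univ (fun l : Fin K => F (Fin.castLE hKp l))
        (Finset.mem_univ k)]
      simp only [← hkk]
      ring
    rw [e1]
    calc |∑ l ∈ Finset.univ.erase k, F (Fin.castLE hKp l)|
        ≤ ∑ l ∈ Finset.univ.erase k, |F (Fin.castLE hKp l)| :=
          Finset.abs_sum_le_sum_abs _ _
      _ ≤ ∑ l ∈ Finset.univ.erase k, 2 / b * ε * |u0 (Fin.castLE hKp l) j| := by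
          refine Finset.sum_le_sum fun l hl => ?_
          have hlne : Fin.castLE hKp l ≠ kk := by
            rw [hkk]
            intro hcon
            exact (Finset.mem_erase.mp hl).1 (Fin.castLE_injective hKp hcon)
          rw [hFdef, abs_mul]
          have h1 := k6 (Fin.castLE hKp l) hlne
          have h2 : |c (Fin.castLE hKp l)| ≤ 2 / b * ε := by
            calc |c (Fin.castLE hKp l)| ≤ 2 / b * |w (Fin.castLE hKp l)| := h1
              _ ≤ 2 / b * ε := by
                  refine mul_le_mul_of_nonneg_left (k4 _) ?_
                  positivity
          exact mul_le_mul_of_nonneg_right h2 (abs_nonneg _)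
      _ ≤ ∑ l : Fin K, 2 / b * ε * |u0 (Fin.castLE hKp l) j| := by
          refine Finset.sum_le_sum_of_subset_of_nonneg (Finset.erase_subset k Finset.univ) ?_
          intro l _ _
          positivity
      _ = 2 / b * (ε * S) := by
          rw [hSdef, Finset.mul_sum, Finset.mul_sum]
          exact Finset.sum_congr rfl fun l _ => by ring
  -- T2 : the kernel part
  have hT2 : |∑ l ∈ Finset.univ.filter fun l : Fin p => K ≤ (l : ℕ), F l|
      ≤ 2 / b * (R + ε * S) := by
    have e2 : lamh * ∑ l ∈ Finset.univ.filter fun l : Fin p => K ≤ (l : ℕ), F l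
        = Ev j - ∑ l : Fin K, W (Fin.castLE hKp l) := by
      have e3 : ∀ l ∈ Finset.univ.filter fun l : Fin p => K ≤ (l : ℕ),
          lamh * F l = W l := by
        intro l hl
        simp only [Finset.mem_filter, Finset.mem_univ, true_and] at hl
        have h1 := k1 l
        rw [hz l hl, sub_zero] at h1
        rw [hFdef, hWdef]
        calc lamh * (c l * u0 l j) = (lamh * c l) * u0 l j := by ring
          _ = w l * u0 l j := by rw [h1]
      rw [Finset.mul_sum, Finset.sum_congr rfl e3, k8, hsplitW]
      ring
    have h1 : |lamh| * |∑ l ∈ Finset.univ.filter fun l : Fin p => K ≤ (l : ℕ), F l|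
        ≤ R + ε * S := by
      rw [← abs_mul, e2]
      calc |Ev j - ∑ l : Fin K, W (Fin.castLE hKp l)|
          ≤ |Ev j| + |∑ l : Fin K, W (Fin.castLE hKp l)| := abs_sub _ _
        _ ≤ R + ε * S := add_le_add k9 hWbound
    have h2 : b / 2 ≤ |lamh| := by rw [hlamh, hkk]; exact hlamlb k
    have h3 : b / 2 * |∑ l ∈ Finset.univ.filter fun l : Fin p => K ≤ (l : ℕ), F l|
        ≤ R + ε * S := by
      refine le_trans ?_ h1
      exact mul_le_mul_of_nonneg_right h2 (abs_nonneg _)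
    rw [show (2 : ℝ) / b * (R + ε * S) = 2 * (R + ε * S) / b by ring, le_div_iff₀ hb0]
    linarith
  -- main coordinate bound
  have hmain : |v j - c kk * u0 kk j| ≤ 2 / b * (ε * S) + 2 / b * (R + ε * S) := by
    have e1 : v j - c kk * u0 kk j
        = (∑ l : Fin K, F (Fin.castLE hKp l) - F kk)
          + ∑ l ∈ Finset.univ.filter fun l : Fin p => K ≤ (l : ℕ), F l := by
      have e2 : v j = ∑ l, F l := k7 j
      rw [e2, hsplitF]
      have e3 : F kk = c kk * u0 kk j := rfl
      rw [e3]
      ring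
    rw [e1]
    calc |(∑ l : Fin K, F (Fin.castLE hKp l) - F kk)
          + ∑ l ∈ Finset.univ.filter fun l : Fin p => K ≤ (l : ℕ), F l|
        ≤ |∑ l : Fin K, F (Fin.castLE hKp l) - F kk|
          + |∑ l ∈ Finset.univ.filter fun l : Fin p => K ≤ (l : ℕ), F l| := abs_add_le _ _
      _ ≤ 2 / b * (ε * S) + 2 / b * (R + ε * S) := add_le_add hT1 hT2
  -- the sign estimate
  have hck2 : c kk ^ 2 ≤ 1 := by
    rw [← k5]
    exact Finset.single_le_sum (f := fun l => c l ^ 2)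
      (fun l _ => sq_nonneg _) (Finset.mem_univ kk)
  have hckabs : |c kk| ≤ 1 := by
    rw [← Real.sqrt_one, ← Real.sqrt_sq_eq_abs]
    exact Real.sqrt_le_sqrt hck2
  have hsign : 1 - |c kk| ≤ 2 / b * ε := by
    have h1 : 1 - c kk ^ 2 = ∑ l ∈ Finset.univ.erase kk, c l ^ 2 := by
      rw [← k5, ← Finset.add_sum_erase Finset.univ (fun l => c l ^ 2)
        (Finset.mem_univ kk)]
      ring
    have h2 : ∑ l ∈ Finset.univ.erase kk, c l ^ 2
        ≤ ∑ l ∈ Finset.univ.erase kk, (2 / b) ^ 2 * w l ^ 2 := by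
      refine Finset.sum_le_sum fun l hl => ?_
      have hlne : l ≠ kk := (Finset.mem_erase.mp hl).1
      have h3 := k6 l hlne
      have h4 : |c l| * |c l| ≤ (2 / b * |w l|) * (2 / b * |w l|) :=
        mul_self_le_mul_self (abs_nonneg _) h3
      calc c l ^ 2 = |c l| * |c l| := by rw [← sq_abs (c l)]; ring
        _ ≤ (2 / b * |w l|) * (2 / b * |w l|) := h4
        _ = (2 / b) ^ 2 * w l ^ 2 := by rw [← sq_abs (w l)]; ring
    have h4 : ∑ l ∈ Finset.univ.erase kk, w l ^ 2 ≤ ε ^ 2 := by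
      refine le_trans ?_ (le_trans (le_of_eq k2) k3)
      exact Finset.sum_le_sum_of_subset_of_nonneg (Finset.erase_subset kk Finset.univ)
        (fun l _ _ => sq_nonneg _)
    have h5 : 1 - c kk ^ 2 ≤ (2 / b) ^ 2 * ε ^ 2 := by
      rw [h1]
      calc ∑ l ∈ Finset.univ.erase kk, c l ^ 2
          ≤ ∑ l ∈ Finset.univ.erase kk, (2 / b) ^ 2 * w l ^ 2 := h2
        _ = (2 / b) ^ 2 * ∑ l ∈ Finset.univ.erase kk, w l ^ 2 := by rw [Finset.mul_sum]
        _ ≤ (2 / b) ^ 2 * ε ^ 2 := by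
            refine mul_le_mul_of_nonneg_left h4 ?_
            positivity
    -- 1 - |c| ≤ 1 - c² ≤ (2ε/b)² ≤ 2ε/b since 2ε/b ≤ 1
    have h6 : 2 / b * ε ≤ 1 := by
      rw [div_mul_eq_mul_div, div_le_one hb0]
      linarith
    have h7 : (2 / b) ^ 2 * ε ^ 2 = (2 / b * ε) ^ 2 := by ring
    have h8 : 0 ≤ 2 / b * ε := by positivity
    have e1 : |c kk| * |c kk| ≤ |c kk| * 1 :=
      mul_le_mul_of_nonneg_left hckabs (abs_nonneg _)
    have e2 : |c kk| * |c kk| = c kk ^ 2 := by rw [← sq_abs (c kk)]; ring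
    have e3 : (2 / b * ε) * (2 / b * ε) ≤ 1 * (2 / b * ε) :=
      mul_le_mul_of_nonneg_right h6 h8
    have e4 : (2 / b) ^ 2 * ε ^ 2 = (2 / b * ε) * (2 / b * ε) := by ring
    linarith
  -- final assembly
  have hdecomp : ωk * v j - u0 kk j
      = ωk * (v j - c kk * u0 kk j) + (|c kk| - 1) * u0 kk j := by
    have e1 : ωk * v j - u0 kk j
        = ωk * (v j - c kk * u0 kk j) + (ωk * c kk) * u0 kk j - u0 kk j := by ring
    rw [e1, homega]
    ring
  have habs1 : |ωk * (v j - c kk * u0 kk j)| = |v j - c kk * u0 kk j| := by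
    rcases hω1 with h1 | h1
    · rw [h1, one_mul]
    · rw [h1, neg_one_mul, abs_neg]
  have hu0S : |u0 kk j| ≤ S := by
    rw [hSdef]
    have := Finset.single_le_sum (f := fun l : Fin K => |u0 (Fin.castLE hKp l) j|)
      (fun l _ => abs_nonneg _) (Finset.mem_univ k)
    simpa only [← hkk] using this
  have hfin : |ωk * v j - u0 kk j|
      ≤ 2 / b * (ε * S) + 2 / b * (R + ε * S) + 2 / b * ε * S := by
    rw [hdecomp]
    calc |ωk * (v j - c kk * u0 kk j) + (|c kk| - 1) * u0 kk j|
        ≤ |ωk * (v j - c kk * u0 kk j)| + |(|c kk| - 1) * u0 kk j| := abs_add_le _ _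
      _ = |v j - c kk * u0 kk j| + (1 - |c kk|) * |u0 kk j| := by
          rw [habs1, abs_mul]
          have e : |(|c kk| - 1)| = 1 - |c kk| := by
            rw [abs_of_nonpos (by linarith : |c kk| - 1 ≤ 0)]
            ring
          rw [e]
      _ ≤ (2 / b * (ε * S) + 2 / b * (R + ε * S)) + (2 / b * ε) * S := by
          refine add_le_add hmain ?_
          have h1 : (1 - |c kk|) * |u0 kk j| ≤ (2 / b * ε) * |u0 kk j| :=
            mul_le_mul_of_nonneg_right hsign (abs_nonneg _)
          refine le_trans h1 ?_
          refine mul_le_mul_of_nonneg_left hu0S ?_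
          positivity
      _ = 2 / b * (ε * S) + 2 / b * (R + ε * S) + 2 / b * ε * S := by ring
  have hcoef : 6 / a / g0 = 6 / b := by
    rw [hbdef]
    field_simp
  calc |ωk * v j - u0 kk j|
      ≤ 2 / b * (ε * S) + 2 / b * (R + ε * S) + 2 / b * ε * S := hfin
    _ ≤ 6 / b * (ε * S + R) := by
        have e1 : 2 / b * (ε * S) + 2 / b * (R + ε * S) + 2 / b * ε * S
            = (2 * (ε * S) + 2 * (R + ε * S) + 2 * (ε * S)) / b := by ring
        have e2 : 6 / b * (ε * S + R) = (6 * (ε * S + R)) / b := by ring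
        rw [e1, e2]
        exact (div_le_div_iff_of_pos_right hb0).mpr (by linarith)
    _ = 6 / a / g0 * (ε * S + R) := by rw [hcoef]

end TopicModel
end
end

section
/- Coordinate bound on population eigenvectors. Under the pLSI model with regularity conditions (R1)–(R2) and min{N,p} ≥ log(n), N·h_min ≥ log²(n), let ξ_1,…,ξ_K be the K leading eigenvectors of G_0 = (1 − 1/N)·M_0^{-1/2}D_0D_0'M_0^{-1/2}. Then there exists a constant C > 0 such that Σ_{ℓ=1}^K |ξ_ℓ(j)| ≤ C√h_j for all 1 ≤ j ≤ p. -/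
noncomputable section
open Filter MeasureTheory ProbabilityTheory Matrix Finset Real
open scoped Classical

namespace TopicModel

lemma aux_quad_diag {p K : ℕ} (A : Matrix (Fin p) (Fin K) ℝ) (d : Fin p → ℝ) (y : Fin K → ℝ) :
    y ⬝ᵥ ((Aᵀ * Matrix.diagonal d * A) *ᵥ y) = ∑ j, d j * ((A *ᵥ y) j)^2 := by
  rw [← Matrix.mulVec_mulVec, ← Matrix.mulVec_mulVec, Matrix.dotProduct_mulVec,
    Matrix.vecMul_transpose]
  simp only [Matrix.mulVec_diagonal, dotProduct]
  exact Finset.sum_congr rfl fun j _ => by ring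

lemma aux_dot_BBt {p n : ℕ} (B : Matrix (Fin p) (Fin n) ℝ) (v w : Fin p → ℝ) :
    v ⬝ᵥ ((B * Bᵀ) *ᵥ w) = (Bᵀ *ᵥ v) ⬝ᵥ (Bᵀ *ᵥ w) := by
  rw [← Matrix.mulVec_mulVec, Matrix.dotProduct_mulVec, ← Matrix.mulVec_transpose]

set_option maxHeartbeats 1000000 in
/-- Lemma: coordinate bound on the population eigenvectors. -/
theorem statement_7 (K : ℕ) (hK : 1 ≤ K) (c1 c2 : ℝ)
    (hc1 : 0 < c1) (hc1' : c1 < 1) (hc2 : 0 < c2) :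
    ∃ C : ℝ, 0 < C ∧
      ∀ (p n N : ℕ) (hp : K + 1 ≤ p) (hn : 0 < n) (hN : 0 < N)
        (A : Matrix (Fin p) (Fin (K + 1)) ℝ) (W : Matrix (Fin (K + 1)) (Fin n) ℝ),
        Reg12 A W c1 c2 →
        Real.log n ≤ min (N : ℝ) (p : ℝ) →
        (Real.log n) ^ 2 ≤ (N : ℝ) * (⨅ j, rowL1 A j) →
        ∀ xi : Fin (K + 1) → Fin p → ℝ,
          LeadingEigenvectors hp
            ((1 - (N : ℝ)⁻¹) •
              (nrm (A * W) (diagAvg (A * W)) * (nrm (A * W) (diagAvg (A * W)))ᵀ)) xi →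
          ∀ j, ∑ l, |xi l j| ≤ C * Real.sqrt (rowL1 A j) := by
  have hlog2pos : (0:ℝ) < Real.log 2 := Real.log_pos (by norm_num)
  have hlog2le : Real.log 2 ≤ 1 := by
    have := Real.log_le_sub_one_of_pos (show (0:ℝ) < 2 by norm_num)
    linarith
  refine ⟨((K:ℝ)+1) / (c1 * Real.log 2), by positivity, ?_⟩
  set C : ℝ := ((K:ℝ)+1) / (c1 * Real.log 2) with hCdef
  intro p n N hp hn hN A W hreg hlogmin hlogsq xi hxi j
  set M := diagAvg (A * W) with hM
  set B := nrm (A * W) M with hB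
  set cN : ℝ := 1 - (N:ℝ)⁻¹ with hcN
  set G := cN • (B * Bᵀ) with hG
  obtain ⟨hAcol, hWcol, hA1, hSW, hSA, _hent, _gap⟩ := hreg
  obtain ⟨lam, u, ⟨horth, heig⟩, hanti, hxieq⟩ := hxi
  have hA0 : ∀ j k, 0 ≤ A j k := fun j k => (hAcol k).1 j
  have hW0 : ∀ k i, 0 ≤ W k i := fun k i => (hWcol i).1 k
  have hW1 : ∀ k i, W k i ≤ 1 := by
    intro k i
    calc W k i ≤ ∑ l, W l i := Finset.single_le_sum (fun l _ => hW0 l i) (Finset.mem_univ k)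
    _ = 1 := (hWcol i).2
  have hrow : ∀ j', rowL1 A j' = ∑ k, A j' k :=
    fun j' => Finset.sum_congr rfl fun k _ => abs_of_nonneg (hA0 j' k)
  have hAW0 : ∀ j' i, 0 ≤ (A * W) j' i := by
    intro j' i
    rw [Matrix.mul_apply]
    exact Finset.sum_nonneg fun k _ => mul_nonneg (hA0 j' k) (hW0 k i)
  have hAWle : ∀ j' i, (A * W) j' i ≤ rowL1 A j' := by
    intro j' i
    rw [Matrix.mul_apply, hrow]
    refine Finset.sum_le_sum fun k _ => ?_
    calc A j' k * W k i ≤ A j' k * 1 := mul_le_mul_of_nonneg_left (hW1 k i) (hA0 j' k)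
    _ = A j' k := mul_one _
  have hnR : (0:ℝ) < (n:ℝ) := by exact_mod_cast hn
  have hsum_eq : ∀ j', ∑ i, (A * W) j' i = n * M j' := by
    intro j'
    rw [hM]
    unfold diagAvg
    field_simp
  have hwbar : ∀ k, c1 ≤ (n:ℝ)⁻¹ * ∑ i, W k i := by
    intro k
    have h1 := hSW (fun l => if l = k then 1 else 0)
    have h2 : (fun l => if l = k then (1:ℝ) else 0) ⬝ᵥ
        (SigmaW W *ᵥ fun l => if l = k then 1 else 0)
        = (n:ℝ)⁻¹ * ∑ i, (W k i)^2 := by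
      unfold SigmaW
      simp [dotProduct, Matrix.mulVec, Matrix.mul_apply, Finset.mul_sum, sq,
        Finset.sum_ite_eq', Finset.sum_ite_eq]
    rw [h2] at h1
    simp only [sq, ite_mul, one_mul, zero_mul, Finset.sum_ite_eq', Finset.mem_univ,
      if_true] at h1
    calc c1 = c1 * (if k = k then (1:ℝ) else 0) := by simp
    _ ≤ (n:ℝ)⁻¹ * ∑ i, W k i * W k i := by simpa using h1
    _ ≤ (n:ℝ)⁻¹ * ∑ i, W k i := by
        refine mul_le_mul_of_nonneg_left ?_ (by positivity)
        exact Finset.sum_le_sum fun i _ => by nlinarith [hW0 k i, hW1 k i]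
  have hMge : ∀ j', c1 * rowL1 A j' ≤ M j' := by
    intro j'
    have e : M j' = ∑ k, A j' k * ((n:ℝ)⁻¹ * ∑ i, W k i) := by
      rw [hM]
      unfold diagAvg
      rw [Finset.mul_sum]
      calc ∑ i, (n:ℝ)⁻¹ * (A * W) j' i
          = ∑ i, ∑ k, (n:ℝ)⁻¹ * (A j' k * W k i) := by
            refine Finset.sum_congr rfl fun i _ => ?_
            rw [Matrix.mul_apply, Finset.mul_sum]
      _ = ∑ k, ∑ i, (n:ℝ)⁻¹ * (A j' k * W k i) := Finset.sum_comm
      _ = ∑ k, A j' k * ((n:ℝ)⁻¹ * ∑ i, W k i) := by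
            refine Finset.sum_congr rfl fun k _ => ?_
            rw [Finset.mul_sum, Finset.mul_sum]
            exact Finset.sum_congr rfl fun i _ => by ring
    rw [e, hrow, Finset.mul_sum]
    exact Finset.sum_le_sum fun k _ => by
      calc c1 * A j' k = A j' k * c1 := by ring
      _ ≤ A j' k * ((n:ℝ)⁻¹ * ∑ i, W k i) := mul_le_mul_of_nonneg_left (hwbar k) (hA0 j' k)
  have hMpos : ∀ j', 0 < M j' := fun j' =>
    lt_of_lt_of_le (mul_pos hc1 (hA1 j')) (hMge j')
  have hMle : ∀ j', M j' ≤ rowL1 A j' := by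
    intro j'
    have h1 : ∑ i, (A * W) j' i ≤ ∑ _i : Fin n, rowL1 A j' :=
      Finset.sum_le_sum fun i _ => hAWle j' i
    rw [Finset.sum_const, Finset.card_univ, Fintype.card_fin, nsmul_eq_mul, hsum_eq j'] at h1
    nlinarith [hnR]
  have hBji : ∀ j' i, B j' i = (Real.sqrt (M j'))⁻¹ * (A * W) j' i := fun _ _ => rfl
  have hBsq : ∀ j' i, (B j' i)^2 = ((A * W) j' i)^2 / M j' := by
    intro j' i
    rw [hBji, mul_pow, inv_pow, Real.sq_sqrt (hMpos j').le]
    ring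
  have hBrow : ∀ j', ∑ i, (B j' i)^2 ≤ n * rowL1 A j' := by
    intro j'
    have h1 : ∑ i, ((A * W) j' i)^2 ≤ rowL1 A j' * ((n:ℝ) * M j') := by
      rw [← hsum_eq j', Finset.mul_sum]
      exact Finset.sum_le_sum fun i _ => by nlinarith [hAWle j' i, hAW0 j' i]
    have h2 : ∑ i, (B j' i)^2 = (∑ i, ((A * W) j' i)^2) / M j' := by
      rw [Finset.sum_div]
      exact Finset.sum_congr rfl fun i _ => hBsq j' i
    rw [h2]
    rw [div_le_iff₀ (hMpos j')]
    nlinarith [hMpos j']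
  have hcN0 : 0 ≤ cN := by
    rw [hcN]
    have h1 : (1:ℝ) ≤ (N:ℝ) := by exact_mod_cast hN
    have := inv_le_one_of_one_le₀ h1
    linarith
  have hUtU : ∀ j1 j2 : Fin p, ∑ m, u m j1 * u m j2 = if j1 = j2 then (1:ℝ) else 0 := by
    set U : Matrix (Fin p) (Fin p) ℝ := Matrix.of u with hU
    have h1 : U * Uᵀ = 1 := by
      ext m l
      rw [Matrix.mul_apply]
      simp only [Matrix.transpose_apply, hU, Matrix.of_apply, Matrix.one_apply]
      exact horth m l
    have h2 : Uᵀ * U = 1 := mul_eq_one_comm.mp h1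
    intro j1 j2
    have := congrFun (congrFun h2 j1) j2
    rw [Matrix.mul_apply] at this
    simp only [Matrix.transpose_apply, hU, Matrix.of_apply, Matrix.one_apply] at this
    exact this
  have hGsym : ∀ v w : Fin p → ℝ, v ⬝ᵥ (G *ᵥ w) = (G *ᵥ v) ⬝ᵥ w := by
    intro v w
    rw [hG]
    simp only [Matrix.smul_mulVec, dotProduct_smul, smul_dotProduct]
    congr 1
    rw [dotProduct_comm ((B * Bᵀ) *ᵥ v) w, aux_dot_BBt, aux_dot_BBt,
      dotProduct_comm]
  have hquadBt : ∀ v : Fin p → ℝ, v ⬝ᵥ (G *ᵥ v) = cN * ∑ i, ((Bᵀ *ᵥ v) i)^2 := by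
    intro v
    rw [hG]
    simp only [Matrix.smul_mulVec, dotProduct_smul]
    rw [aux_dot_BBt]
    simp only [dotProduct, smul_eq_mul]
    congr 1
    exact Finset.sum_congr rfl fun i _ => (pow_two _).symm
  have huu : ∀ m, ∑ j', (u m j')^2 = 1 := by
    intro m
    have := horth m m
    rw [if_pos rfl] at this
    rw [← this]
    exact Finset.sum_congr rfl fun j' _ => pow_two _
  have hlamval : ∀ m, lam m = cN * ∑ i, ((Bᵀ *ᵥ u m) i)^2 := by
    intro m
    have h1 : u m ⬝ᵥ (G *ᵥ u m) = lam m := by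
      rw [heig m]
      simp only [dotProduct_smul, smul_eq_mul]
      have : u m ⬝ᵥ u m = 1 := by
        simp only [dotProduct]
        rw [← huu m]
        exact Finset.sum_congr rfl fun j' _ => (pow_two _).symm
      rw [this, mul_one]
    rw [← h1, hquadBt]
  have hlam0 : ∀ m, 0 ≤ lam m := by
    intro m
    rw [hlamval m]
    positivity
  have hGentry : ∀ j1 j2 : Fin p, G j1 j2 = cN * ∑ i, B j1 i * B j2 i := by
    intro j1 j2
    rw [hG]
    simp [Matrix.smul_apply, Matrix.mul_apply, Matrix.transpose_apply, smul_eq_mul]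
  have hGdiag_le : ∀ j', G j' j' ≤ cN * ((n:ℝ) * rowL1 A j') := by
    intro j'
    rw [hGentry]
    refine mul_le_mul_of_nonneg_left ?_ hcN0
    calc ∑ i, B j' i * B j' i = ∑ i, (B j' i)^2 :=
      Finset.sum_congr rfl fun i _ => (pow_two _).symm
    _ ≤ (n:ℝ) * rowL1 A j' := hBrow j'
  have hGdiag_eq : ∀ j', G j' j' = ∑ m, lam m * (u m j')^2 := by
    intro j'
    calc G j' j' = ∑ j2, G j' j2 * (if j2 = j' then 1 else 0) := by
          simp [mul_ite, mul_one, mul_zero, Finset.sum_ite_eq']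
    _ = ∑ j2, G j' j2 * ∑ m, u m j2 * u m j' := by
          exact Finset.sum_congr rfl fun j2 _ => by rw [hUtU j2 j']
    _ = ∑ j2, ∑ m, G j' j2 * (u m j2 * u m j') := by
          exact Finset.sum_congr rfl fun j2 _ => Finset.mul_sum _ _ _
    _ = ∑ m, ∑ j2, G j' j2 * (u m j2 * u m j') := Finset.sum_comm
    _ = ∑ m, u m j' * (G *ᵥ u m) j' := by
          refine Finset.sum_congr rfl fun m _ => ?_
          rw [Matrix.mulVec, dotProduct, Finset.mul_sum]
          exact Finset.sum_congr rfl fun j2 _ => by ring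
    _ = ∑ m, lam m * (u m j')^2 := by
          refine Finset.sum_congr rfl fun m _ => ?_
          rw [heig m]
          simp only [Pi.smul_apply, smul_eq_mul]
          ring
  have hsumxi : ∑ l, |xi l j| = ∑ l : Fin (K+1), |u (Fin.castLE hp l) j| :=
    Finset.sum_congr rfl fun l _ => by rw [hxieq l]
  by_cases hN2 : 2 ≤ N
  · -- main case
    have hNR : (1:ℝ) < (N:ℝ) := by exact_mod_cast (by omega : 1 < N)
    have hcNpos : 0 < cN := by
      rw [hcN]
      have := inv_lt_one_of_one_lt₀ hNR
      linarith
    have hKlt : K < p := lt_of_lt_of_le (Nat.lt_succ_self K) hp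
    set kK : Fin p := ⟨K, hKlt⟩ with hkK
    have hKp' : K ≤ p := le_trans (Nat.le_succ K) hp
    set T : Matrix (Fin p) (Fin (K+1)) ℝ :=
      Matrix.of fun j' k => (Real.sqrt (M j'))⁻¹ * A j' k with hT
    set F : Matrix (Fin K) (Fin (K+1)) ℝ :=
      Matrix.of fun m k => ∑ j', u (Fin.castLE hKp' m) j' * T j' k with hF
    have hninj : ¬ Function.Injective F.mulVecLin := by
      intro hinj
      have h := LinearMap.finrank_le_finrank_of_injective hinj
      simp only [Module.finrank_fintype_fun_eq_card, Fintype.card_fin] at h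
      omega
    have hker : LinearMap.ker F.mulVecLin ≠ ⊥ := fun h => hninj (LinearMap.ker_eq_bot.mp h)
    obtain ⟨y, hymem, hy0⟩ := (Submodule.ne_bot_iff _).mp hker
    have hFy : F *ᵥ y = 0 := by
      have := LinearMap.mem_ker.mp hymem
      rwa [Matrix.mulVecLin_apply] at this
    set x := T *ᵥ y with hx
    set a := A *ᵥ y with ha
    have haj : ∀ j', a j' = ∑ k, A j' k * y k := by
      intro j'
      rw [ha, Matrix.mulVec, dotProduct]
    have hxj : ∀ j', x j' = (Real.sqrt (M j'))⁻¹ * a j' := by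
      intro j'
      rw [hx, Matrix.mulVec, dotProduct, haj, Finset.mul_sum]
      exact Finset.sum_congr rfl fun k _ => by rw [hT]; simp [Matrix.of_apply]; ring
    set Q := ∑ j', (a j')^2 / M j' with hQ
    have hxsq : ∀ j', (x j')^2 = (a j')^2 / M j' := by
      intro j'
      rw [hxj, mul_pow, inv_pow, Real.sq_sqrt (hMpos j').le]
      ring
    have hxQ : ∑ j', (x j')^2 = Q := Finset.sum_congr rfl fun j' _ => hxsq j'
    have hy2pos : 0 < ∑ k, (y k)^2 := by
      have hexk : ∃ k, y k ≠ 0 := by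
        by_contra h
        push_neg at h
        exact hy0 (funext h)
      obtain ⟨k, hk⟩ := hexk
      refine Finset.sum_pos' (fun k' _ => sq_nonneg _) ⟨k, Finset.mem_univ k, ?_⟩
      positivity
    have hQge : c1 * ∑ k, (y k)^2 ≤ Q := by
      have h1 := hSA y
      have h2 : y ⬝ᵥ (SigmaA A *ᵥ y) = ∑ j', (rowL1 A j')⁻¹ * (a j')^2 := by
        unfold SigmaA
        rw [aux_quad_diag]
      rw [h2] at h1
      refine le_trans h1 (Finset.sum_le_sum fun j' _ => ?_)
      rw [inv_mul_eq_div]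
      exact div_le_div_of_nonneg_left (sq_nonneg _) (hMpos j') (hMle j')
    have hQpos : 0 < Q := lt_of_lt_of_le (mul_pos hc1 hy2pos) hQge
    set z := fun k => ∑ j', A j' k * (a j' / M j') with hz
    have hyz : ∑ k, y k * z k = Q := by
      simp only [hz, Finset.mul_sum]
      rw [Finset.sum_comm]
      refine Finset.sum_congr rfl fun j' _ => ?_
      calc ∑ k, y k * (A j' k * (a j' / M j'))
          = (∑ k, A j' k * y k) * (a j' / M j') := by
            rw [Finset.sum_mul]
            exact Finset.sum_congr rfl fun k _ => by ring
      _ = a j' * (a j' / M j') := by rw [← haj]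
      _ = (a j')^2 / M j' := by ring
    have hBtx : ∀ i, (Bᵀ *ᵥ x) i = (Wᵀ *ᵥ z) i := by
      intro i
      have e1 : ∀ j', B j' i * x j' = (A * W) j' i * (a j' / M j') := by
        intro j'
        rw [hBji, hxj]
        have e2 : (Real.sqrt (M j'))⁻¹ * (Real.sqrt (M j'))⁻¹ = (M j')⁻¹ := by
          rw [← mul_inv, Real.mul_self_sqrt (hMpos j').le]
        calc (Real.sqrt (M j'))⁻¹ * (A * W) j' i * ((Real.sqrt (M j'))⁻¹ * a j')
            = ((Real.sqrt (M j'))⁻¹ * (Real.sqrt (M j'))⁻¹) * ((A * W) j' i * a j') := by ring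
        _ = (M j')⁻¹ * ((A * W) j' i * a j') := by rw [e2]
        _ = (A * W) j' i * (a j' / M j') := by ring
      calc (Bᵀ *ᵥ x) i = ∑ j', B j' i * x j' := by
            rw [Matrix.mulVec, dotProduct]
            exact Finset.sum_congr rfl fun j' _ => by rw [Matrix.transpose_apply]
      _ = ∑ j', (A * W) j' i * (a j' / M j') := Finset.sum_congr rfl fun j' _ => e1 j'
      _ = ∑ j', ∑ k, A j' k * W k i * (a j' / M j') := by
            refine Finset.sum_congr rfl fun j' _ => ?_
            rw [Matrix.mul_apply, Finset.sum_mul]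
      _ = ∑ k, ∑ j', A j' k * W k i * (a j' / M j') := Finset.sum_comm
      _ = ∑ k, W k i * z k := by
            refine Finset.sum_congr rfl fun k _ => ?_
            rw [hz, Finset.mul_sum]
            exact Finset.sum_congr rfl fun j' _ => by ring
      _ = (Wᵀ *ᵥ z) i := by
            rw [Matrix.mulVec, dotProduct]
            exact (Finset.sum_congr rfl fun k _ => by rw [Matrix.transpose_apply]).symm
    have hWzge : (n:ℝ) * (c1 * ∑ k, (z k)^2) ≤ ∑ i, ((Wᵀ *ᵥ z) i)^2 := by
      have h1 := hSW z
      have h2 : z ⬝ᵥ (SigmaW W *ᵥ z) = (n:ℝ)⁻¹ * ∑ i, ((Wᵀ *ᵥ z) i)^2 := by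
        unfold SigmaW
        rw [Matrix.smul_mulVec, dotProduct_smul, aux_dot_BBt]
        simp only [smul_eq_mul, dotProduct]
        congr 1
        exact Finset.sum_congr rfl fun i _ => (pow_two _).symm
      rw [h2] at h1
      have h3 := mul_le_mul_of_nonneg_left h1 hnR.le
      have h4 : (n:ℝ) * ((n:ℝ)⁻¹ * ∑ i, ((Wᵀ *ᵥ z) i)^2) = ∑ i, ((Wᵀ *ᵥ z) i)^2 := by
        field_simp
      rw [h4] at h3
      exact h3
    have hzge : c1 * Q ≤ ∑ k, (z k)^2 := by
      have hCS := Finset.sum_mul_sq_le_sq_mul_sq Finset.univ y z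
      rw [hyz] at hCS
      have h6 := mul_le_mul_of_nonneg_left hQge hQpos.le
      have h5 : (∑ k, (y k)^2) * (c1 * Q) ≤ (∑ k, (y k)^2) * (∑ k, (z k)^2) := by
        calc (∑ k, (y k)^2) * (c1 * Q) = Q * (c1 * ∑ k, (y k)^2) := by ring
        _ ≤ Q * Q := h6
        _ = Q^2 := (pow_two Q).symm
        _ ≤ (∑ k, (y k)^2) * (∑ k, (z k)^2) := hCS
      exact le_of_mul_le_mul_left h5 hy2pos
    have hlower : cN * ((n:ℝ) * (c1 * (c1 * Q))) ≤ x ⬝ᵥ (G *ᵥ x) := by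
      rw [hquadBt x]
      have e : ∑ i, ((Bᵀ *ᵥ x) i)^2 = ∑ i, ((Wᵀ *ᵥ z) i)^2 :=
        Finset.sum_congr rfl fun i _ => by rw [hBtx i]
      rw [e]
      refine mul_le_mul_of_nonneg_left ?_ hcN0
      calc (n:ℝ) * (c1 * (c1 * Q)) ≤ (n:ℝ) * (c1 * ∑ k, (z k)^2) := by
            refine mul_le_mul_of_nonneg_left ?_ hnR.le
            exact mul_le_mul_of_nonneg_left hzge hc1.le
      _ ≤ ∑ i, ((Wᵀ *ᵥ z) i)^2 := hWzge
    set cm := fun m : Fin p => ∑ j', u m j' * x j' with hcm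
    have hcmle : ∀ m : Fin p, (hm : m.val < K) → cm m = 0 := by
      intro m hm
      have h0 : (F *ᵥ y) ⟨m.val, hm⟩ = 0 := by rw [hFy]; rfl
      have hmm : Fin.castLE hKp' ⟨m.val, hm⟩ = m := by
        apply Fin.ext
        rfl
      rw [← h0]
      calc cm m = ∑ j', u m j' * ∑ k, T j' k * y k := by
            rw [hcm]
            refine Finset.sum_congr rfl fun j' _ => ?_
            rw [hx, Matrix.mulVec, dotProduct]
      _ = ∑ j', ∑ k, u m j' * T j' k * y k := by
            refine Finset.sum_congr rfl fun j' _ => ?_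
            rw [Finset.mul_sum]
            exact Finset.sum_congr rfl fun k _ => by ring
      _ = ∑ k, ∑ j', u m j' * T j' k * y k := Finset.sum_comm
      _ = (F *ᵥ y) ⟨m.val, hm⟩ := by
            rw [Matrix.mulVec, dotProduct]
            refine Finset.sum_congr rfl fun k _ => ?_
            rw [hF]
            simp only [Matrix.of_apply, hmm]
            rw [Finset.sum_mul]
    have hexp : ∀ j', x j' = ∑ m, cm m * u m j' := by
      intro j'
      have : ∑ m, cm m * u m j' = ∑ m, ∑ j2, u m j2 * x j2 * u m j' := by
        refine Finset.sum_congr rfl fun m _ => ?_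
        rw [hcm, Finset.sum_mul]
      rw [this]
      symm
      calc ∑ m, ∑ j2, u m j2 * x j2 * u m j'
          = ∑ j2, ∑ m, u m j2 * x j2 * u m j' := Finset.sum_comm
      _ = ∑ j2, (∑ m, u m j2 * u m j') * x j2 := by
            refine Finset.sum_congr rfl fun j2 _ => ?_
            rw [Finset.sum_mul]
            exact Finset.sum_congr rfl fun m _ => by ring
      _ = ∑ j2, (if j2 = j' then (1:ℝ) else 0) * x j2 := by
            exact Finset.sum_congr rfl fun j2 _ => by rw [hUtU j2 j']
      _ = x j' := by
            simp [Finset.sum_ite_eq']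
    have hquad_eq : x ⬝ᵥ (G *ᵥ x) = ∑ m, lam m * (cm m)^2 := by
      calc x ⬝ᵥ (G *ᵥ x) = ∑ j', x j' * (G *ᵥ x) j' := rfl
      _ = ∑ j', (∑ m, cm m * u m j') * (G *ᵥ x) j' :=
            Finset.sum_congr rfl fun j' _ => by rw [← hexp j']
      _ = ∑ j', ∑ m, cm m * u m j' * (G *ᵥ x) j' := by
            refine Finset.sum_congr rfl fun j' _ => ?_
            rw [Finset.sum_mul]
      _ = ∑ m, ∑ j', cm m * u m j' * (G *ᵥ x) j' := Finset.sum_comm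
      _ = ∑ m, cm m * (u m ⬝ᵥ (G *ᵥ x)) := by
            refine Finset.sum_congr rfl fun m _ => ?_
            rw [dotProduct, Finset.mul_sum]
            exact Finset.sum_congr rfl fun j' _ => by ring
      _ = ∑ m, cm m * ((G *ᵥ u m) ⬝ᵥ x) :=
            Finset.sum_congr rfl fun m _ => by rw [hGsym]
      _ = ∑ m, lam m * (cm m)^2 := by
            refine Finset.sum_congr rfl fun m _ => ?_
            rw [heig m, smul_dotProduct]
            have : u m ⬝ᵥ x = cm m := rfl
            rw [this]
            simp [smul_eq_mul]
            ring
    have hcmQ : ∑ m, (cm m)^2 = Q := by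
      have hcmapp : ∀ m, cm m = ∑ j', u m j' * x j' := fun m => rfl
      calc ∑ m, (cm m)^2 = ∑ m, ∑ j', cm m * (u m j' * x j') := by
            refine Finset.sum_congr rfl fun m _ => ?_
            rw [← Finset.mul_sum, ← hcmapp m, pow_two]
      _ = ∑ j', ∑ m, cm m * (u m j' * x j') := Finset.sum_comm
      _ = ∑ j', (∑ m, cm m * u m j') * x j' := by
            refine Finset.sum_congr rfl fun j' _ => ?_
            rw [Finset.sum_mul]
            exact Finset.sum_congr rfl fun m _ => by ring
      _ = ∑ j', x j' * x j' := Finset.sum_congr rfl fun j' _ => by rw [← hexp j']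
      _ = Q := by
            rw [← hxQ]
            exact Finset.sum_congr rfl fun j' _ => (pow_two _).symm
    have hupper : x ⬝ᵥ (G *ᵥ x) ≤ lam kK * Q := by
      rw [hquad_eq, ← hcmQ, Finset.mul_sum]
      refine Finset.sum_le_sum fun m _ => ?_
      by_cases hm : m.val < K
      · rw [hcmle m hm]
        simp
      · have hle : kK ≤ m := by
          rw [Fin.le_def]
          simp only [hkK]
          omega
        have := hanti hle
        nlinarith [sq_nonneg (cm m)]
    have hlamK : cN * ((n:ℝ) * (c1 * c1)) ≤ lam kK := by
      have h1 := le_trans hlower hupper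
      have h2 : (cN * ((n:ℝ) * (c1 * c1))) * Q ≤ lam kK * Q := by
        calc (cN * ((n:ℝ) * (c1 * c1))) * Q = cN * ((n:ℝ) * (c1 * (c1 * Q))) := by ring
        _ ≤ lam kK * Q := h1
      exact le_of_mul_le_mul_right h2 hQpos
    have hfinal : ∀ l : Fin (K+1), |u (Fin.castLE hp l) j| ≤ Real.sqrt (rowL1 A j) / c1 := by
      intro l
      set m := Fin.castLE hp l with hmdef
      have hml : m ≤ kK := by
        rw [Fin.le_def]
        simp only [hkK, hmdef, Fin.coe_castLE]
        omega
      have h1 : cN * ((n:ℝ) * (c1 * c1)) ≤ lam m := le_trans hlamK (hanti hml)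
      have h2 : lam m * (u m j)^2 ≤ G j j := by
        rw [hGdiag_eq j]
        exact Finset.single_le_sum (f := fun m' => lam m' * (u m' j)^2)
          (fun m' _ => mul_nonneg (hlam0 m') (sq_nonneg _)) (Finset.mem_univ m)
      have h3 := hGdiag_le j
      have hc2 : c1 * c1 * (u m j)^2 ≤ rowL1 A j := by
        have hcnn : 0 < cN * (n:ℝ) := mul_pos hcNpos hnR
        nlinarith [mul_le_mul_of_nonneg_right h1 (sq_nonneg (u m j)), h2, h3, hcnn]
      have h4 : c1 * |u m j| ≤ Real.sqrt (rowL1 A j) := by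
        rw [show (c1 * |u m j|) = Real.sqrt ((c1 * |u m j|)^2) from
          (Real.sqrt_sq (by positivity)).symm]
        apply Real.sqrt_le_sqrt
        calc (c1 * |u m j|)^2 = c1 * c1 * (u m j)^2 := by rw [mul_pow, sq_abs]; ring
        _ ≤ rowL1 A j := hc2
      rw [le_div_iff₀ hc1]
      calc |u m j| * c1 = c1 * |u m j| := by ring
      _ ≤ _ := h4
    rw [hsumxi]
    have hden : c1 * Real.log 2 ≤ c1 := by nlinarith
    have hCge : ((K:ℝ)+1)/c1 ≤ C := by
      rw [hCdef]
      exact div_le_div_of_nonneg_left (by positivity) (by positivity) hden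
    calc ∑ l : Fin (K+1), |u (Fin.castLE hp l) j|
        ≤ ∑ _l : Fin (K+1), Real.sqrt (rowL1 A j) / c1 :=
          Finset.sum_le_sum fun l _ => hfinal l
    _ = ((K:ℝ)+1) * (Real.sqrt (rowL1 A j) / c1) := by
          rw [Finset.sum_const, Finset.card_univ, Fintype.card_fin, nsmul_eq_mul]
          push_cast
          ring
    _ = (((K:ℝ)+1)/c1) * Real.sqrt (rowL1 A j) := by ring
    _ ≤ C * Real.sqrt (rowL1 A j) :=
          mul_le_mul_of_nonneg_right hCge (Real.sqrt_nonneg _)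
  · -- N = 1
    have hN1 : N = 1 := by omega
    by_cases hn2 : 2 ≤ n
    · -- trivial bound
      have habs : ∀ m : Fin p, |u m j| ≤ 1 := by
        intro m
        have h2 : (u m j)^2 ≤ 1 := by
          rw [← huu m]
          exact Finset.single_le_sum (f := fun j' => (u m j')^2)
            (fun j' _ => sq_nonneg _) (Finset.mem_univ j)
        nlinarith [abs_nonneg (u m j), sq_abs (u m j)]
      have hhj : (Real.log 2)^2 ≤ rowL1 A j := by
        have h1 : (⨅ j', rowL1 A j') ≤ rowL1 A j :=
          ciInf_le (Finite.bddBelow_range _) j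
        have h2 : Real.log 2 ≤ Real.log n :=
          Real.log_le_log (by norm_num) (by exact_mod_cast hn2)
        have h3 : (Real.log n)^2 ≤ rowL1 A j := by
          rw [hN1] at hlogsq
          push_cast at hlogsq
          linarith
        nlinarith [Real.log_nonneg (show (1:ℝ) ≤ n by exact_mod_cast hn)]
      have hsq : Real.log 2 ≤ Real.sqrt (rowL1 A j) := by
        rw [show Real.log 2 = Real.sqrt ((Real.log 2)^2) from
          (Real.sqrt_sq hlog2pos.le).symm]
        exact Real.sqrt_le_sqrt hhj
      have hCpos : (0:ℝ) < C := by rw [hCdef]; positivity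
      rw [hsumxi]
      calc ∑ l : Fin (K+1), |u (Fin.castLE hp l) j| ≤ ∑ _l : Fin (K+1), (1:ℝ) :=
            Finset.sum_le_sum fun l _ => habs _
      _ = ((K:ℝ)+1) := by
            rw [Finset.sum_const, Finset.card_univ, Fintype.card_fin, nsmul_eq_mul]
            push_cast
            ring
      _ ≤ C * Real.log 2 := by
            rw [hCdef, div_mul_eq_mul_div, le_div_iff₀ (by positivity)]
            nlinarith [mul_pos (show (0:ℝ) < (K:ℝ)+1 by positivity) hlog2pos, hc1']
      _ ≤ C * Real.sqrt (rowL1 A j) :=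
            mul_le_mul_of_nonneg_left hsq hCpos.le
    · -- n = 1 : contradiction with (R1)
      exfalso
      have hn1 : n = 1 := by omega
      subst hn1
      set k0 : Fin (K+1) := ⟨0, by omega⟩ with hk0
      set k1 : Fin (K+1) := ⟨1, by omega⟩ with hk1
      have hk01 : k0 ≠ k1 := by
        simp [hk0, hk1, Fin.ext_iff]
      set w := fun k : Fin (K+1) => W k 0 with hw
      have hquad : ∀ v : Fin (K+1) → ℝ,
          v ⬝ᵥ (SigmaW W *ᵥ v) = (∑ k, v k * w k)^2 := by
        intro v
        unfold SigmaW
        rw [Matrix.smul_mulVec, dotProduct_smul, aux_dot_BBt]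
        simp only [Nat.cast_one, inv_one, one_smul, dotProduct]
        rw [Fin.sum_univ_one]
        have e : (Wᵀ *ᵥ v) 0 = ∑ k, v k * w k := by
          rw [Matrix.mulVec, dotProduct]
          exact Finset.sum_congr rfl fun k _ => by
            rw [Matrix.transpose_apply, hw]; ring
        rw [e, sq]
      by_cases hw0 : w k0 = 0
      · have h1 := hSW (fun k => if k = k0 then 1 else 0)
        rw [hquad] at h1
        have e1 : ∑ k, (if k = k0 then (1:ℝ) else 0) * w k = 0 := by
          simp [Finset.sum_ite_eq', hw0]
        have e2 : ∑ k, ((if k = k0 then (1:ℝ) else 0))^2 = 1 := by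
          simp [sq, ite_mul, Finset.sum_ite_eq']
        rw [e1, e2] at h1
        simp at h1
        linarith
      · set v := fun k : Fin (K+1) =>
          (if k = k0 then w k1 else 0) + (if k = k1 then -(w k0) else 0) with hv
        have h1 := hSW v
        rw [hquad] at h1
        have e1 : ∑ k, v k * w k = 0 := by
          simp only [hv, add_mul, Finset.sum_add_distrib, ite_mul, zero_mul, neg_mul,
            Finset.sum_ite_eq', Finset.mem_univ, if_true]
          ring
        have e2 : (w k0)^2 ≤ ∑ k, (v k)^2 := by
          have hterm : (v k1)^2 = (w k0)^2 := by
            have hv1 : v k1 = -(w k0) := by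
              simp [hv, if_neg (Ne.symm hk01)]
            rw [hv1]
            ring
          rw [← hterm]
          exact Finset.single_le_sum (f := fun k => (v k)^2)
            (fun k _ => sq_nonneg _) (Finset.mem_univ k1)
        rw [e1] at h1
        have hw0pos : 0 < (w k0)^2 := by positivity
        nlinarith

end TopicModel
end
end

section
/- Concentration of the cross terms. Under the pLSI model, suppose Nn·h_min/log(n) → ∞, and let Z = D − D_0 with rows Z_1',…,Z_p' and let W_k' denote the k-th row of W. Then with probability 1 − o(n^{-3}), for all 1 ≤ k ≤ K: |Z_j'W_k| ≤ C·N^{-1/2}√(n·h_j·log(n)) for all 1 ≤ j ≤ p, and ‖M_0^{-1/2}ZW_k‖ ≤ C·N^{-1/2}√(n·p·log(n)). -/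
noncomputable section
open Filter MeasureTheory ProbabilityTheory Matrix Finset Real
open scoped Classical

namespace TopicModel

section Aux

lemma exp_sub_le (u : ℝ) (hu : |u| ≤ 1) : Real.exp u ≤ 1 + u + u ^ 2 := by
  have h := Real.exp_bound hu (n := 2) (by norm_num)
  have h2 : ∑ i ∈ Finset.range 2, u ^ i / (Nat.factorial i : ℝ) = 1 + u := by
    simp [Finset.sum_range_succ, Nat.factorial]
  rw [h2] at h
  have h3 : (↑(Nat.succ 2) / ((Nat.factorial 2 : ℝ) * (2:ℕ))) = (3/4 : ℝ) := by
    norm_num [Nat.factorial]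
  rw [h3] at h
  have := (abs_le.mp h).2
  nlinarith [sq_abs u, sq_nonneg u]

open MeasureTheory ProbabilityTheory

lemma mgf_indicator_le {Ω : Type*} [MeasurableSpace Ω] (μ : Measure Ω) [IsProbabilityMeasure μ]
    {s : Set Ω} (hs : MeasurableSet s) (c t : ℝ) (hct : |t * c| ≤ 1) :
    mgf (fun ω => c * ((if ω ∈ s then (1:ℝ) else 0) - (μ s).toReal)) μ t ≤
      Real.exp ((μ s).toReal * (t * c) ^ 2) := by
  set q := (μ s).toReal with hq
  have hq0 : 0 ≤ q := ENNReal.toReal_nonneg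
  have hq1 : q ≤ 1 := by
    rw [hq]
    exact ENNReal.toReal_le_of_le_ofReal one_pos.le (by simpa using prob_le_one (μ := μ) (s := s))
  set u := t * c with hu
  have hfun : (fun ω => Real.exp (t * (c * ((if ω ∈ s then (1:ℝ) else 0) - q))))
      = fun ω => s.indicator (fun _ => Real.exp (u * (1 - q)) - Real.exp (-(u * q))) ω
          + Real.exp (-(u * q)) := by
    funext ω
    by_cases h : ω ∈ s <;> simp [h, Set.indicator_of_mem, Set.indicator_of_notMem, hu] <;>
      ring_nf
  have hint : Integrable (fun ω => s.indicator
      (fun _ => Real.exp (u * (1 - q)) - Real.exp (-(u * q))) ω) μ :=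
    (integrable_const _).indicator hs
  have hmgf : mgf (fun ω => c * ((if ω ∈ s then (1:ℝ) else 0) - q)) μ t
      = q * Real.exp (u * (1 - q)) + (1 - q) * Real.exp (-(u * q)) := by
    rw [mgf]
    simp only [hfun]
    rw [integral_add hint (integrable_const _), integral_indicator_const _ hs, integral_const]
    simp [smul_eq_mul]
    rw [show μ.real s = q from rfl]
    ring
  rw [hmgf]
  have key : q * Real.exp (u * (1 - q)) + (1 - q) * Real.exp (-(u * q))
      = Real.exp (-(u * q)) * (1 + q * (Real.exp u - 1)) := by
    rw [show u * (1 - q) = u + -(u*q) by ring, Real.exp_add]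
    ring
  rw [key]
  have h1 : 1 + q * (Real.exp u - 1) ≤ Real.exp (q * (Real.exp u - 1)) :=
    Real.add_one_le_exp _ |>.trans_eq' (by ring_nf)
  have h2 : Real.exp (-(u*q)) * (1 + q * (Real.exp u - 1))
      ≤ Real.exp (q * (Real.exp u - 1) - u * q) := by
    calc Real.exp (-(u*q)) * (1 + q * (Real.exp u - 1))
        ≤ Real.exp (-(u*q)) * Real.exp (q * (Real.exp u - 1)) := by
          exact mul_le_mul_of_nonneg_left h1 (Real.exp_pos _).le
      _ = Real.exp (q * (Real.exp u - 1) - u * q) := by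
          rw [← Real.exp_add]; ring_nf
  refine h2.trans ?_
  rw [Real.exp_le_exp]
  have h3 : Real.exp u - 1 - u ≤ u ^ 2 := by
    have := exp_sub_le u hct
    linarith
  nlinarith [sq_nonneg u]

lemma chernoff_tail {Ω : Type*} [MeasurableSpace Ω] (μ : Measure Ω) [IsProbabilityMeasure μ]
    {ι : Type*} [Fintype ι] (X : ι → Ω → ℝ) (hmeas : ∀ i, Measurable (X i))
    (hindep : iIndepFun X μ)
    (hbd : ∀ i ω, |X i ω| ≤ 1)
    (σ : ι → ℝ) (b : ℝ) (hb : 0 < b)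
    (hmgf : ∀ i, ∀ l : ℝ, |l| ≤ b → mgf (X i) μ l ≤ Real.exp (σ i * l ^ 2))
    (V : ℝ) (hV : ∑ i, σ i ≤ V) (hVpos : 0 < V)
    (t : ℝ) (ht0 : 0 ≤ t) (ht : t ≤ 2 * b * V) :
    (μ {ω | t ≤ ∑ i, X i ω}).toReal ≤ Real.exp (-(t ^ 2) / (4 * V)) := by
  set l := t / (2 * V) with hl
  have hl0 : 0 ≤ l := div_nonneg ht0 (by linarith)
  have hlb : l ≤ b := by
    rw [hl, div_le_iff₀ (by linarith)]
    linarith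
  have hleb : |l| ≤ b := by rwa [abs_of_nonneg hl0]
  set S : Ω → ℝ := ∑ i, X i with hS
  have hSmeas : Measurable S := by
    rw [hS]
    have h1 : (∑ i, X i) = fun ω => ∑ i, X i ω := by funext ω; simp [Finset.sum_apply]
    rw [h1]
    exact Finset.measurable_sum _ fun i _ => hmeas i
  have hint : Integrable (fun ω => Real.exp (l * S ω)) μ := by
    refine Integrable.mono' (integrable_const (Real.exp (l * Fintype.card ι)))
      ((hSmeas.const_mul l).exp.aestronglyMeasurable) (Filter.Eventually.of_forall fun ω => ?_)
    rw [Real.norm_eq_abs, abs_of_pos (Real.exp_pos _), Real.exp_le_exp]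
    have hSle : S ω ≤ Fintype.card ι := by
      rw [hS, Finset.sum_apply]
      calc ∑ i, X i ω ≤ ∑ i : ι, (1:ℝ) := Finset.sum_le_sum fun i _ => (abs_le.mp (hbd i ω)).2
        _ = Fintype.card ι := by simp
    exact mul_le_mul_of_nonneg_left hSle hl0
  have hset : {ω | t ≤ ∑ i, X i ω} = {ω | t ≤ S ω} := by
    ext ω; simp [hS, Finset.sum_apply]
  have hch := measure_ge_le_exp_mul_mgf (μ := μ) (X := S) t hl0 hint
  have hmgfS : mgf S μ l ≤ Real.exp ((∑ i, σ i) * l ^ 2) := by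
    rw [hS, hindep.mgf_sum hmeas]
    calc ∏ i, mgf (X i) μ l ≤ ∏ i, Real.exp (σ i * l ^ 2) :=
          Finset.prod_le_prod (fun i _ => mgf_nonneg) (fun i _ => hmgf i l hleb)
      _ = Real.exp (∑ i, σ i * l ^ 2) := by rw [Real.exp_sum]
      _ = Real.exp ((∑ i, σ i) * l ^ 2) := by rw [← Finset.sum_mul]
  rw [hset]
  refine hch.trans ?_
  calc Real.exp (-l * t) * mgf S μ l ≤ Real.exp (-l * t) * Real.exp ((∑ i, σ i) * l ^ 2) :=
        mul_le_mul_of_nonneg_left hmgfS (Real.exp_pos _).le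
    _ ≤ Real.exp (-l * t) * Real.exp (V * l ^ 2) :=
        mul_le_mul_of_nonneg_left
          (Real.exp_le_exp.mpr (mul_le_mul_of_nonneg_right hV (sq_nonneg _)))
          (Real.exp_pos _).le
    _ = Real.exp (V * l ^ 2 - l * t) := by rw [← Real.exp_add]; congr 1; ring
    _ ≤ Real.exp (-(t ^ 2) / (4 * V)) := by
        rw [Real.exp_le_exp, hl]
        have h4V : (0:ℝ) < 4 * V := by linarith
        field_simp
        nlinarith [sq_nonneg t, sq_nonneg V]

lemma chernoff_abs {Ω : Type*} [MeasurableSpace Ω] (μ : Measure Ω) [IsProbabilityMeasure μ]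
    {ι : Type*} [Fintype ι] (X : ι → Ω → ℝ) (hmeas : ∀ i, Measurable (X i))
    (hindep : iIndepFun X μ)
    (hbd : ∀ i ω, |X i ω| ≤ 1)
    (σ : ι → ℝ) (b : ℝ) (hb : 0 < b)
    (hmgf : ∀ i, ∀ l : ℝ, |l| ≤ b → mgf (X i) μ l ≤ Real.exp (σ i * l ^ 2))
    (V : ℝ) (hV : ∑ i, σ i ≤ V) (hVpos : 0 < V)
    (t : ℝ) (ht0 : 0 ≤ t) (ht : t ≤ 2 * b * V) :
    (μ {ω | t ≤ |∑ i, X i ω|}).toReal ≤ 2 * Real.exp (-(t ^ 2) / (4 * V)) := by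
  have hXneg : ∀ i, Measurable fun ω => -X i ω := fun i => (hmeas i).neg
  have hindepneg : iIndepFun (fun i ω => -X i ω) μ := by
    have := hindep.comp (fun _ : ι => fun x : ℝ => -x) (fun _ => measurable_neg)
    exact this
  have h1 := chernoff_tail μ X hmeas hindep hbd σ b hb hmgf V hV hVpos t ht0 ht
  have h2 := chernoff_tail μ (fun i ω => -X i ω) hXneg hindepneg
      (fun i ω => by simpa using hbd i ω) σ b hb
      (fun i l hl => by
        have : mgf (fun ω => -X i ω) μ l = mgf (X i) μ (-l) := by
          rw [← mgf_neg]; rfl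
        rw [this]
        have := hmgf i (-l) (by rwa [abs_neg])
        simpa using this)
      V hV hVpos t ht0 ht
  have hsub : {ω | t ≤ |∑ i, X i ω|} ⊆
      {ω | t ≤ ∑ i, X i ω} ∪ {ω | t ≤ ∑ i, (fun i ω => -X i ω) i ω} := by
    intro ω hω
    simp only [Set.mem_setOf_eq] at hω
    rcases abs_cases (∑ i, X i ω) with ⟨he, _⟩ | ⟨he, _⟩
    · left; simp only [Set.mem_setOf_eq]; linarith
    · right; simp only [Set.mem_setOf_eq, Finset.sum_neg_distrib]
      linarith
  calc (μ {ω | t ≤ |∑ i, X i ω|}).toReal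
      ≤ ((μ {ω | t ≤ ∑ i, X i ω}) + μ {ω | t ≤ ∑ i, (fun i ω => -X i ω) i ω}).toReal := by
        refine ENNReal.toReal_mono ?_ ((measure_mono hsub).trans (measure_union_le _ _))
        exact ENNReal.add_ne_top.mpr ⟨measure_ne_top _ _, measure_ne_top _ _⟩
    _ = (μ {ω | t ≤ ∑ i, X i ω}).toReal
        + (μ {ω | t ≤ ∑ i, (fun i ω => -X i ω) i ω}).toReal :=
        ENNReal.toReal_add (measure_ne_top _ _) (measure_ne_top _ _)
    _ ≤ 2 * Real.exp (-(t ^ 2) / (4 * V)) := by linarith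


lemma probVec_le_one {m : Type*} [Fintype m] {v : m → ℝ} (h : IsProbVec v) (i : m) : v i ≤ 1 := by
  rcases h with ⟨h0, hs⟩
  calc v i ≤ ∑ j, v j := Finset.single_le_sum (fun j _ => h0 j) (Finset.mem_univ i)
    _ = 1 := hs

lemma rowL1_eq {p K : ℕ} {A : Matrix (Fin p) (Fin K) ℝ} (hA : ColsProb A) (j : Fin p) :
    rowL1 A j = ∑ k, A j k := by
  unfold rowL1
  exact Finset.sum_congr rfl fun k _ => abs_of_nonneg ((hA k).1 j)

lemma D0_nonneg {p K n : ℕ} {A : Matrix (Fin p) (Fin K) ℝ} {W : Matrix (Fin K) (Fin n) ℝ}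
    (hA : ColsProb A) (hW : ColsProb W) (j : Fin p) (i : Fin n) : 0 ≤ (A * W) j i := by
  rw [Matrix.mul_apply]
  exact Finset.sum_nonneg fun l _ => mul_nonneg ((hA l).1 j) ((hW i).1 l)

lemma D0_le_rowL1 {p K n : ℕ} {A : Matrix (Fin p) (Fin K) ℝ} {W : Matrix (Fin K) (Fin n) ℝ}
    (hA : ColsProb A) (hW : ColsProb W) (j : Fin p) (i : Fin n) :
    (A * W) j i ≤ rowL1 A j := by
  rw [Matrix.mul_apply, rowL1_eq hA]
  refine Finset.sum_le_sum fun l _ => ?_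
  have h1 := (hA l).1 j
  have h2 := probVec_le_one (hW i) l
  nlinarith

lemma D0_le_one {p K n : ℕ} {A : Matrix (Fin p) (Fin K) ℝ} {W : Matrix (Fin K) (Fin n) ℝ}
    (hA : ColsProb A) (hW : ColsProb W) (j : Fin p) (i : Fin n) : (A * W) j i ≤ 1 := by
  have hcol : IsProbVec (fun j' => (A * W) j' i) := by
    constructor
    · exact fun j' => D0_nonneg hA hW j' i
    · simp only [Matrix.mul_apply]
      rw [Finset.sum_comm]
      calc ∑ l, ∑ j', A j' l * W l i = ∑ l, W l i * ∑ j', A j' l := by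
            congr 1; funext l; rw [Finset.mul_sum]; congr 1; funext j'; ring
        _ = ∑ l, W l i := by
            refine Finset.sum_congr rfl fun l _ => ?_
            rw [(hA l).2, mul_one]
        _ = 1 := (hW i).2
  exact probVec_le_one hcol j

end Aux



lemma key_tail {K p n N : ℕ} {Ω : Type} [MeasurableSpace Ω] {μ : Measure Ω}
    (A : Matrix (Fin p) (Fin (K + 1)) ℝ) (W : Matrix (Fin (K + 1)) (Fin n) ℝ)
    (X : Ω → Fin n → Fin N → Fin p)
    (hA : ColsProb A) (hW : ColsProb W)
    (hplsi : IsPLSIWords μ (A * W) X)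
    (hN : 0 < N) (hn : 0 < n) (j : Fin p) (k : Fin (K + 1))
    (hh : 0 < rowL1 A j) (hlog : 0 < Real.log n)
    (hcond : 16 * Real.log n ≤ (N : ℝ) * n * rowL1 A j) :
    (μ {ω | 8 * (Real.sqrt N)⁻¹ * Real.sqrt (n * rowL1 A j * Real.log n)
        ≤ |∑ i, (empD (X ω) j i - (A * W) j i) * W k i|}).toReal
      ≤ 2 * Real.exp (-(16 * Real.log n)) := by
  obtain ⟨hprob, hmeas, hindep, hlaw⟩ := hplsi
  haveI : IsProbabilityMeasure μ := hprob
  have hNR : (0:ℝ) < N := by exact_mod_cast hN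
  have hnR : (0:ℝ) < n := by exact_mod_cast hn
  set h := rowL1 A j with hdef
  set Y : Fin n × Fin N → Ω → ℝ := fun im ω =>
    (W k im.1 / N) * ((if X ω im.1 im.2 = j then (1:ℝ) else 0) - (A * W) j im.1) with hY
  have hW0 : ∀ i, 0 ≤ W k i := fun i => (hW i).1 k
  have hW1 : ∀ i, W k i ≤ 1 := fun i => probVec_le_one (hW i) k
  have hq0 : ∀ i, 0 ≤ (A * W) j i := fun i => D0_nonneg hA hW j i
  have hq1 : ∀ i, (A * W) j i ≤ 1 := fun i => D0_le_one hA hW j i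
  have hqh : ∀ i, (A * W) j i ≤ h := fun i => D0_le_rowL1 hA hW j i
  have hsum : ∀ ω, ∑ im : Fin n × Fin N, Y im ω
      = ∑ i, (empD (X ω) j i - (A * W) j i) * W k i := by
    intro ω
    rw [Fintype.sum_prod_type]
    refine Finset.sum_congr rfl fun i _ => ?_
    calc ∑ m, Y (i, m) ω
        = (W k i / N) * ∑ m : Fin N,
            ((if X ω i m = j then (1:ℝ) else 0) - (A * W) j i) := by
          rw [Finset.mul_sum]
      _ = (W k i / N) * ((∑ m, if X ω i m = j then (1:ℝ) else 0) - N * (A * W) j i) := by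
          rw [Finset.sum_sub_distrib, Finset.sum_const, Finset.card_univ, Fintype.card_fin,
            nsmul_eq_mul]
      _ = (empD (X ω) j i - (A * W) j i) * W k i := by
          show _ = ((N : ℝ)⁻¹ * (∑ m, if X ω i m = j then (1:ℝ) else 0) - (A * W) j i) * W k i
          field_simp
  have hYmeas : ∀ im, Measurable (Y im) := by
    intro im
    have heq : Y im = (fun x : Fin p =>
        (W k im.1 / N) * ((if x = j then (1:ℝ) else 0) - (A * W) j im.1))
        ∘ (fun ω => X ω im.1 im.2) := rfl
    rw [heq]
    exact measurable_from_top.comp (hmeas im.1 im.2)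
  have hYindep : iIndepFun Y μ := by
    have := hindep.comp (fun im : Fin n × Fin N => fun x : Fin p =>
      (W k im.1 / N) * ((if x = j then (1:ℝ) else 0) - (A * W) j im.1))
      (fun im => measurable_from_top)
    exact this
  have hYbd : ∀ im ω, |Y im ω| ≤ 1 := by
    intro im ω
    rw [hY, abs_mul]
    have h1 : |W k im.1 / (N:ℝ)| ≤ 1 := by
      rw [abs_of_nonneg (div_nonneg (hW0 im.1) hNR.le), div_le_one hNR]
      calc W k im.1 ≤ 1 := hW1 im.1
        _ ≤ N := by exact_mod_cast hN
    have h2 : |(if X ω im.1 im.2 = j then (1:ℝ) else 0) - (A * W) j im.1| ≤ 1 := by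
      rw [abs_le]
      constructor
      · have := hq1 im.1; split <;> linarith
      · have := hq0 im.1; split <;> linarith
    calc |W k im.1 / (N:ℝ)| * |(if X ω im.1 im.2 = j then (1:ℝ) else 0) - (A * W) j im.1|
        ≤ 1 * 1 := mul_le_mul h1 h2 (abs_nonneg _) zero_le_one
      _ = 1 := mul_one 1
  set σ : Fin n × Fin N → ℝ := fun im => (A * W) j im.1 * (W k im.1 / N) ^ 2 with hσ
  have hmgfY : ∀ im, ∀ l : ℝ, |l| ≤ (N:ℝ) → mgf (Y im) μ l ≤ Real.exp (σ im * l ^ 2) := by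
    intro im l hl
    set s : Set Ω := (fun ω => X ω im.1 im.2) ⁻¹' {j} with hsdef
    have hsmeas : MeasurableSet s := (hmeas im.1 im.2) (measurableSet_singleton j)
    have hμs : (μ s).toReal = (A * W) j im.1 := by
      have h0 := hlaw im.1 im.2 j
      have : s = {ω | X ω im.1 im.2 = j} := by
        ext ω; simp [hsdef]
      rw [this]
      exact h0
    have hc0 : 0 ≤ W k im.1 / (N:ℝ) := div_nonneg (hW0 im.1) hNR.le
    have hlc : |l * (W k im.1 / N)| ≤ 1 := by
      rw [abs_mul, abs_of_nonneg hc0]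
      calc |l| * (W k im.1 / N) ≤ (N:ℝ) * (W k im.1 / N) :=
            mul_le_mul_of_nonneg_right hl hc0
        _ = W k im.1 := by field_simp
        _ ≤ 1 := hW1 im.1
    have hYeq : Y im = fun ω =>
        (W k im.1 / N) * ((if ω ∈ s then (1:ℝ) else 0) - (μ s).toReal) := by
      funext ω
      rw [hμs]
      show (W k im.1 / N) * ((if X ω im.1 im.2 = j then (1:ℝ) else 0) - (A * W) j im.1) = _
      congr 2
      apply if_congr _ rfl rfl
      simp [hsdef]
    rw [hYeq]
    refine (mgf_indicator_le μ hsmeas (W k im.1 / N) l hlc).trans ?_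
    rw [hμs, Real.exp_le_exp]
    apply le_of_eq
    rw [hσ]
    ring
  set V : ℝ := n * h / N with hVdef
  have hVpos : 0 < V := div_pos (mul_pos hnR hh) hNR
  have hVsum : ∑ im, σ im ≤ V := by
    rw [Fintype.sum_prod_type]
    have hterm : ∀ i : Fin n, ∑ m : Fin N, σ (i, m) ≤ h / N := by
      intro i
      have he : (N:ℝ) * ((A * W) j i * (W k i / N) ^ 2) = (A * W) j i * W k i ^ 2 / N := by
        field_simp
      have hsc : ∀ m : Fin N, σ (i, m) = (A * W) j i * (W k i / N) ^ 2 := fun m => rfl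
      have hconst : ∑ m : Fin N, σ (i, m)
          = (N:ℝ) * ((A * W) j i * (W k i / N) ^ 2) := by
        rw [Finset.sum_congr rfl fun m _ => hsc m, Finset.sum_const, Finset.card_univ,
          Fintype.card_fin, nsmul_eq_mul]
      rw [hconst, he]
      rw [div_le_div_iff₀ hNR hNR]
      have hq := hqh i
      have hw1 := hW1 i
      have hw0 := hW0 i
      have hq0' := hq0 i
      have hW2 : W k i ^ 2 ≤ 1 := by nlinarith
      have h1 : (A * W) j i * W k i ^ 2 ≤ h := by nlinarith
      nlinarith [hNR]
    calc ∑ i : Fin n, ∑ m : Fin N, σ (i, m) ≤ ∑ i : Fin n, h / N :=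
          Finset.sum_le_sum fun i _ => hterm i
      _ = n * (h / N) := by
          rw [Finset.sum_const, Finset.card_univ, Fintype.card_fin, nsmul_eq_mul]
      _ = V := by rw [hVdef]; ring
  set t : ℝ := 8 * (Real.sqrt N)⁻¹ * Real.sqrt (n * h * Real.log n) with htdef
  have hx0 : (0:ℝ) ≤ (n:ℝ) * h * Real.log n :=
    mul_nonneg (mul_nonneg hnR.le hh.le) hlog.le
  have ht0 : 0 ≤ t := by positivity
  have ht0' : 0 ≤ t := ht0
  have htsq : t ^ 2 = 64 * ((n:ℝ) * h * Real.log n) / N := by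
    rw [htdef]
    rw [mul_pow, mul_pow, Real.sq_sqrt hx0, inv_pow, Real.sq_sqrt hNR.le]
    field_simp
    ring
  have ht2V : t ≤ 2 * (N:ℝ) * V := by
    have hRHS : (0:ℝ) ≤ 2 * (N:ℝ) * V := by nlinarith [hVpos, hNR]
    have hVsq : (2 * (N:ℝ) * V) ^ 2 = 4 * (n:ℝ) ^ 2 * h ^ 2 := by
      rw [hVdef]
      field_simp
      ring
    have hsq : t ^ 2 ≤ (2 * (N:ℝ) * V) ^ 2 := by
      rw [htsq, hVsq, div_le_iff₀ hNR]
      nlinarith [hcond, hnR, hh, hlog]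
    calc t = Real.sqrt (t ^ 2) := (Real.sqrt_sq ht0).symm
      _ ≤ Real.sqrt ((2 * (N:ℝ) * V) ^ 2) := Real.sqrt_le_sqrt hsq
      _ = 2 * (N:ℝ) * V := Real.sqrt_sq hRHS
  have hset : {ω | t ≤ |∑ i, (empD (X ω) j i - (A * W) j i) * W k i|}
      = {ω | t ≤ |∑ im, Y im ω|} := by
    ext ω
    rw [Set.mem_setOf_eq, Set.mem_setOf_eq, hsum ω]
  have hmain := chernoff_abs μ Y hYmeas hYindep hYbd σ (N:ℝ) hNR hmgfY V hVsum hVpos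
    t ht0 ht2V
  have hexp : -(t ^ 2) / (4 * V) = -(16 * Real.log n) := by
    rw [htsq, hVdef]
    field_simp
    ring
  rw [hset]
  rw [← hexp]
  exact hmain


lemma M0_ge {K p n : ℕ} (A : Matrix (Fin p) (Fin (K + 1)) ℝ)
    (W : Matrix (Fin (K + 1)) (Fin n) ℝ)
    (hA : ColsProb A) (hW : ColsProb W) (c1 : ℝ)
    (hlam : lamMinGe (SigmaW W) c1) (hn : 0 < n) (j : Fin p) :
    c1 * rowL1 A j ≤ diagAvg (A * W) j := by
  have hnR : (0:ℝ) < n := by exact_mod_cast hn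
  have havg : ∀ l, c1 ≤ (n:ℝ)⁻¹ * ∑ i, W l i := by
    intro l
    have hx := hlam (fun m => if m = l then 1 else 0)
    have hxs : ∑ m, (if m = l then (1:ℝ) else 0) ^ 2 = 1 := by simp
    rw [hxs, mul_one] at hx
    have hdot : (fun m => if m = l then (1:ℝ) else 0) ⬝ᵥ
        (SigmaW W *ᵥ fun m => if m = l then (1:ℝ) else 0) = SigmaW W l l := by
      simp [dotProduct, Matrix.mulVec, mul_ite, ite_mul, mul_zero, zero_mul,
        mul_one, one_mul, Finset.sum_ite_eq, Finset.sum_ite_eq']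
    rw [hdot] at hx
    have hSll : SigmaW W l l = (n:ℝ)⁻¹ * ∑ i, W l i * W l i := by
      simp [SigmaW, Matrix.mul_apply, Matrix.transpose_apply]
    rw [hSll] at hx
    refine hx.trans ?_
    refine mul_le_mul_of_nonneg_left ?_ (inv_nonneg.mpr hnR.le)
    refine Finset.sum_le_sum fun i _ => ?_
    have h0 := (hW i).1 l
    have h1 := probVec_le_one (hW i) l
    nlinarith
  rw [diagAvg]
  have hcomm : ∑ i, (A * W) j i = ∑ l, A j l * ∑ i, W l i := by
    simp only [Matrix.mul_apply]
    rw [Finset.sum_comm]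
    exact Finset.sum_congr rfl fun l _ => by rw [Finset.mul_sum]
  rw [hcomm, rowL1_eq hA, Finset.mul_sum, Finset.mul_sum]
  refine Finset.sum_le_sum fun l _ => ?_
  have h0 := (hA l).1 j
  calc c1 * A j l ≤ ((n:ℝ)⁻¹ * ∑ i, W l i) * A j l :=
        mul_le_mul_of_nonneg_right (havg l) h0
    _ = (n:ℝ)⁻¹ * (A j l * ∑ i, W l i) := by ring

/-- Lemma: concentration of the cross terms `Z'W_k`. -/
theorem statement_17 (K : ℕ) (hK : 1 ≤ K) (c1 : ℝ) (hc1 : 0 < c1) :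
    ∃ C : ℝ, 0 < C ∧
      ∀ (N p : ℕ → ℕ)
        (A : ∀ n : ℕ, Matrix (Fin (p n)) (Fin (K + 1)) ℝ)
        (W : ∀ n : ℕ, Matrix (Fin (K + 1)) (Fin n) ℝ)
        (Ω : ℕ → Type) (mΩ : ∀ n, MeasurableSpace (Ω n)) (μ : ∀ n, Measure (Ω n))
        (X : ∀ n : ℕ, Ω n → Fin n → Fin (N n) → Fin (p n)),
        (∀ n, K + 1 ≤ p n) → (∀ n, 0 < N n) →
        (∀ n, N n ≤ n ∧ p n ≤ n) →
        (∀ n, ColsProb (A n)) → (∀ n, ColsProb (W n)) →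
        (∀ n, ∀ j, 0 < rowL1 (A n) j) →
        (∀ n, lamMinGe (SigmaW (W n)) c1) →
        (∀ n, IsPLSIWords (μ n) (A n * W n) (X n)) →
        Tendsto (fun n : ℕ =>
          (N n : ℝ) * n * (⨅ j, rowL1 (A n) j) / Real.log n) atTop atTop →
        Tendsto (fun n : ℕ => (n : ℝ) ^ 3 *
          (1 - (μ n {ω | ∀ k,
            (∀ j, |∑ i, (empD (X n ω) j i - (A n * W n) j i) * W n k i| ≤
                C * (Real.sqrt (N n : ℝ))⁻¹ *
                  Real.sqrt ((n : ℝ) * rowL1 (A n) j * Real.log n)) ∧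
            enorm (fun j => (Real.sqrt (diagAvg (A n * W n) j))⁻¹ *
                ∑ i, (empD (X n ω) j i - (A n * W n) j i) * W n k i) ≤
              C * (Real.sqrt (N n : ℝ))⁻¹ *
                Real.sqrt ((n : ℝ) * (p n : ℝ) * Real.log n)}).toReal))
          atTop (nhds 0) := by
  classical
  set C : ℝ := 16 + 8 / Real.sqrt c1 with hCdef
  have hsc1 : 0 < Real.sqrt c1 := Real.sqrt_pos.mpr hc1
  have hC8 : (8:ℝ) ≤ C := by
    have : 0 ≤ 8 / Real.sqrt c1 := by positivity
    rw [hCdef]; linarith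
  have hCpos : 0 < C := by positivity
  have hCc1 : 8 / Real.sqrt c1 ≤ C := by rw [hCdef]; linarith
  refine ⟨C, hCpos, ?_⟩
  intro N p A W Ω mΩ μ X hKp hNpos hle hA hW hh hlam hplsi htend
  have hEv2 : ∀ᶠ n : ℕ in atTop,
      16 ≤ (N n : ℝ) * n * (⨅ j, rowL1 (A n) j) / Real.log n :=
    htend.eventually_ge_atTop 16
  refine squeeze_zero' ?_ ?_
    (g := fun n : ℕ => 2 * ((K:ℝ)+1) * ((n:ℝ) ^ (4:ℕ) * Real.exp (-(16 * Real.log n)))) ?_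
  · refine Filter.Eventually.of_forall fun n => ?_
    haveI : IsProbabilityMeasure (μ n) := (hplsi n).1
    refine mul_nonneg (by positivity) ?_
    rw [sub_nonneg]
    simpa using ENNReal.toReal_mono (by simp) (prob_le_one (μ := μ n))
  · filter_upwards [eventually_ge_atTop 2, hEv2] with n hn2 hcond16
    haveI : IsProbabilityMeasure (μ n) := (hplsi n).1
    have hn0 : 0 < n := by omega
    have hnR : (0:ℝ) < n := by exact_mod_cast hn0
    have hn1R : (1:ℝ) < n := by exact_mod_cast hn2
    have hlog : 0 < Real.log n := Real.log_pos hn1R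
    have hNR : (0:ℝ) < N n := by exact_mod_cast hNpos n
    haveI : Nonempty (Fin (p n)) := ⟨⟨0, lt_of_lt_of_le (by omega) (hKp n)⟩⟩
    have hcond : ∀ j, 16 * Real.log n ≤ (N n : ℝ) * n * rowL1 (A n) j := by
      intro j
      rw [le_div_iff₀ hlog] at hcond16
      have hinf : (⨅ j', rowL1 (A n) j') ≤ rowL1 (A n) j :=
        ciInf_le (Finite.bddBelow_range _) j
      have hNn0 : (0:ℝ) ≤ (N n : ℝ) * n := by positivity
      nlinarith
    set L := Real.log n with hLdef
    set B : Set (Ω n) := ⋃ k : Fin (K+1), ⋃ j : Fin (p n),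
      {ω | 8 * (Real.sqrt (N n))⁻¹ * Real.sqrt ((n:ℝ) * rowL1 (A n) j * L)
        ≤ |∑ i, (empD (X n ω) j i - (A n * W n) j i) * W n k i|} with hBdef
    have hkey : ∀ (k : Fin (K+1)) (j : Fin (p n)),
        (μ n {ω | 8 * (Real.sqrt (N n))⁻¹ * Real.sqrt ((n:ℝ) * rowL1 (A n) j * L)
          ≤ |∑ i, (empD (X n ω) j i - (A n * W n) j i) * W n k i|}).toReal
          ≤ 2 * Real.exp (-(16 * L)) :=
      fun k j => key_tail (A n) (W n) (X n) (hA n) (hW n) (hplsi n) (hNpos n) hn0 j k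
        (hh n j) hlog (hcond j)
    have hM0 : ∀ j, c1 * rowL1 (A n) j ≤ diagAvg (A n * W n) j :=
      fun j => M0_ge (A n) (W n) (hA n) (hW n) c1 (hlam n) hn0 j
    have hM0pos : ∀ j, 0 < diagAvg (A n * W n) j :=
      fun j => lt_of_lt_of_le (mul_pos hc1 (hh n j)) (hM0 j)
    -- inclusion of Bᶜ in the good event
    have hsub : Bᶜ ⊆ {ω | ∀ k : Fin (K+1),
        (∀ j, |∑ i, (empD (X n ω) j i - (A n * W n) j i) * W n k i| ≤
            C * (Real.sqrt (N n : ℝ))⁻¹ *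
              Real.sqrt ((n : ℝ) * rowL1 (A n) j * Real.log n)) ∧
        enorm (fun j => (Real.sqrt (diagAvg (A n * W n) j))⁻¹ *
            ∑ i, (empD (X n ω) j i - (A n * W n) j i) * W n k i) ≤
          C * (Real.sqrt (N n : ℝ))⁻¹ *
            Real.sqrt ((n : ℝ) * (p n : ℝ) * Real.log n)} := by
      intro ω hω
      simp only [hBdef, Set.compl_iUnion, Set.mem_iInter, Set.mem_compl_iff,
        Set.mem_setOf_eq] at hω
      intro k
      have hSb : ∀ j, |∑ i, (empD (X n ω) j i - (A n * W n) j i) * W n k i|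
          ≤ 8 * (Real.sqrt (N n))⁻¹ * Real.sqrt ((n:ℝ) * rowL1 (A n) j * L) :=
        fun j => (not_le.mp (hω k j)).le
      have htle : ∀ j, 8 * (Real.sqrt (N n))⁻¹ * Real.sqrt ((n:ℝ) * rowL1 (A n) j * L)
          ≤ C * (Real.sqrt (N n))⁻¹ * Real.sqrt ((n:ℝ) * rowL1 (A n) j * L) := by
        intro j
        have h8 : (0:ℝ) ≤ (Real.sqrt (N n))⁻¹ * Real.sqrt ((n:ℝ) * rowL1 (A n) j * L) := by
          positivity
        calc 8 * (Real.sqrt (N n))⁻¹ * Real.sqrt ((n:ℝ) * rowL1 (A n) j * L)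
            = 8 * ((Real.sqrt (N n))⁻¹ * Real.sqrt ((n:ℝ) * rowL1 (A n) j * L)) := by ring
          _ ≤ C * ((Real.sqrt (N n))⁻¹ * Real.sqrt ((n:ℝ) * rowL1 (A n) j * L)) :=
            mul_le_mul_of_nonneg_right hC8 h8
          _ = C * (Real.sqrt (N n))⁻¹ * Real.sqrt ((n:ℝ) * rowL1 (A n) j * L) := by ring
      refine ⟨fun j => (hSb j).trans (htle j), ?_⟩
      -- the norm bound
      have hterm : ∀ j, ((Real.sqrt (diagAvg (A n * W n) j))⁻¹ *
          ∑ i, (empD (X n ω) j i - (A n * W n) j i) * W n k i) ^ 2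
          ≤ 64 * ((n:ℝ) * L) / (c1 * N n) := by
        intro j
        set h' := rowL1 (A n) j with hh'def
        have hh' : 0 < h' := hh n j
        set M := diagAvg (A n * W n) j with hMdef
        have hM : 0 < M := hM0pos j
        set Sv := ∑ i, (empD (X n ω) j i - (A n * W n) j i) * W n k i with hSvdef
        have hinv : ((Real.sqrt M)⁻¹) ^ 2 = M⁻¹ := by
          rw [inv_pow, Real.sq_sqrt hM.le]
        have hx0 : (0:ℝ) ≤ (n:ℝ) * h' * L := by
          have := mul_nonneg (mul_nonneg hnR.le hh'.le) hlog.le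
          exact this
        have hSsq : Sv ^ 2 ≤ 64 * ((n:ℝ) * h' * L) / N n := by
          have h1 : Sv ^ 2 ≤ (8 * (Real.sqrt (N n))⁻¹ * Real.sqrt ((n:ℝ) * h' * L)) ^ 2 := by
            rw [← sq_abs Sv]
            exact pow_le_pow_left₀ (abs_nonneg _) (hSb j) 2
          have h2 : (8 * (Real.sqrt (N n))⁻¹ * Real.sqrt ((n:ℝ) * h' * L)) ^ 2
              = 64 * ((n:ℝ) * h' * L) / N n := by
            rw [mul_pow, mul_pow, Real.sq_sqrt hx0, inv_pow, Real.sq_sqrt hNR.le]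
            field_simp
            ring
          rw [h2] at h1
          exact h1
        have hMinv : M⁻¹ ≤ (c1 * h')⁻¹ :=
          inv_anti₀ (mul_pos hc1 hh') (hM0 j)
        calc ((Real.sqrt M)⁻¹ * Sv) ^ 2 = M⁻¹ * Sv ^ 2 := by rw [mul_pow, hinv]
          _ ≤ (c1 * h')⁻¹ * (64 * ((n:ℝ) * h' * L) / N n) :=
            mul_le_mul hMinv hSsq (sq_nonneg _) (by positivity)
          _ = 64 * ((n:ℝ) * L) / (c1 * N n) := by
            field_simp
      have hsum2 : ∑ j, ((Real.sqrt (diagAvg (A n * W n) j))⁻¹ *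
          ∑ i, (empD (X n ω) j i - (A n * W n) j i) * W n k i) ^ 2
          ≤ (p n : ℝ) * (64 * ((n:ℝ) * L) / (c1 * N n)) := by
        calc ∑ j, ((Real.sqrt (diagAvg (A n * W n) j))⁻¹ *
            ∑ i, (empD (X n ω) j i - (A n * W n) j i) * W n k i) ^ 2
            ≤ ∑ _j : Fin (p n), 64 * ((n:ℝ) * L) / (c1 * N n) :=
              Finset.sum_le_sum fun j _ => hterm j
          _ = (p n : ℝ) * (64 * ((n:ℝ) * L) / (c1 * N n)) := by
              rw [Finset.sum_const, Finset.card_univ, Fintype.card_fin, nsmul_eq_mul]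
      have hplog0 : (0:ℝ) ≤ (n:ℝ) * (p n : ℝ) * L :=
        mul_nonneg (mul_nonneg hnR.le (by positivity)) hlog.le
      have hR0 : (0:ℝ) ≤ C * (Real.sqrt (N n))⁻¹ * Real.sqrt ((n:ℝ) * (p n : ℝ) * L) := by
        positivity
      have hRsq : (C * (Real.sqrt (N n))⁻¹ * Real.sqrt ((n:ℝ) * (p n : ℝ) * L)) ^ 2
          = C ^ 2 * ((n:ℝ) * (p n : ℝ) * L) / N n := by
        rw [mul_pow, mul_pow, Real.sq_sqrt hplog0, inv_pow, Real.sq_sqrt hNR.le]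
        field_simp
      have h64 : 64 / c1 ≤ C ^ 2 := by
        have h1 : (8 / Real.sqrt c1) ^ 2 = 64 / c1 := by
          rw [div_pow, Real.sq_sqrt hc1.le]
          norm_num
        nlinarith [hCc1, hCpos, div_pos (by norm_num : (0:ℝ) < 8) hsc1]
      have hle2 : (p n : ℝ) * (64 * ((n:ℝ) * L) / (c1 * N n))
          ≤ C ^ 2 * ((n:ℝ) * (p n : ℝ) * L) / N n := by
        have hfac : (0:ℝ) ≤ ((n:ℝ) * (p n : ℝ) * L) / N n := by
          exact div_nonneg hplog0 hNR.le
        calc (p n : ℝ) * (64 * ((n:ℝ) * L) / (c1 * N n))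
            = (64 / c1) * (((n:ℝ) * (p n : ℝ) * L) / N n) := by
              field_simp
          _ ≤ C ^ 2 * (((n:ℝ) * (p n : ℝ) * L) / N n) :=
              mul_le_mul_of_nonneg_right h64 hfac
          _ = C ^ 2 * ((n:ℝ) * (p n : ℝ) * L) / N n := by ring
      show enorm _ ≤ _
      rw [enorm]
      calc Real.sqrt (∑ j, ((Real.sqrt (diagAvg (A n * W n) j))⁻¹ *
            ∑ i, (empD (X n ω) j i - (A n * W n) j i) * W n k i) ^ 2)
          ≤ Real.sqrt ((C * (Real.sqrt (N n))⁻¹ * Real.sqrt ((n:ℝ) * (p n : ℝ) * L)) ^ 2) :=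
            Real.sqrt_le_sqrt (hsum2.trans (hle2.trans_eq hRsq.symm))
        _ = C * (Real.sqrt (N n))⁻¹ * Real.sqrt ((n:ℝ) * (p n : ℝ) * L) := Real.sqrt_sq hR0
    -- measure bound on B
    have hBbound : (μ n B).toReal ≤ ((K:ℝ)+1) * (p n : ℝ) * (2 * Real.exp (-(16 * L))) := by
      have h1 : μ n B ≤ ∑ k : Fin (K+1), ∑ j : Fin (p n),
          μ n {ω | 8 * (Real.sqrt (N n))⁻¹ * Real.sqrt ((n:ℝ) * rowL1 (A n) j * L)
            ≤ |∑ i, (empD (X n ω) j i - (A n * W n) j i) * W n k i|} := by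
        rw [hBdef]
        refine (measure_iUnion_fintype_le _ _).trans (Finset.sum_le_sum fun k _ => ?_)
        exact measure_iUnion_fintype_le _ _
      have hne : (∑ k : Fin (K+1), ∑ j : Fin (p n),
          μ n {ω | 8 * (Real.sqrt (N n))⁻¹ * Real.sqrt ((n:ℝ) * rowL1 (A n) j * L)
            ≤ |∑ i, (empD (X n ω) j i - (A n * W n) j i) * W n k i|}) ≠ ⊤ := by
        refine (ENNReal.sum_lt_top.mpr fun k _ => ?_).ne
        exact ENNReal.sum_lt_top.mpr fun j _ => measure_lt_top _ _
      have h2 := ENNReal.toReal_mono hne h1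
      rw [ENNReal.toReal_sum (fun k _ => (ENNReal.sum_lt_top.mpr
        fun j _ => measure_lt_top _ _).ne)] at h2
      have h3 : ∀ k : Fin (K+1), (∑ j : Fin (p n),
          μ n {ω | 8 * (Real.sqrt (N n))⁻¹ * Real.sqrt ((n:ℝ) * rowL1 (A n) j * L)
            ≤ |∑ i, (empD (X n ω) j i - (A n * W n) j i) * W n k i|}).toReal
          ≤ (p n : ℝ) * (2 * Real.exp (-(16 * L))) := by
        intro k
        rw [ENNReal.toReal_sum (fun j _ => (measure_lt_top _ _).ne)]
        calc ∑ j : Fin (p n), (μ n {ω | 8 * (Real.sqrt (N n))⁻¹ *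
              Real.sqrt ((n:ℝ) * rowL1 (A n) j * L)
              ≤ |∑ i, (empD (X n ω) j i - (A n * W n) j i) * W n k i|}).toReal
            ≤ ∑ _j : Fin (p n), 2 * Real.exp (-(16 * L)) :=
              Finset.sum_le_sum fun j _ => hkey k j
          _ = (p n : ℝ) * (2 * Real.exp (-(16 * L))) := by
              rw [Finset.sum_const, Finset.card_univ, Fintype.card_fin, nsmul_eq_mul]
      calc (μ n B).toReal ≤ ∑ k : Fin (K+1), (∑ j : Fin (p n),
            μ n {ω | 8 * (Real.sqrt (N n))⁻¹ * Real.sqrt ((n:ℝ) * rowL1 (A n) j * L)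
              ≤ |∑ i, (empD (X n ω) j i - (A n * W n) j i) * W n k i|}).toReal := h2
        _ ≤ ∑ _k : Fin (K+1), (p n : ℝ) * (2 * Real.exp (-(16 * L))) :=
            Finset.sum_le_sum fun k _ => h3 k
        _ = ((K:ℝ)+1) * ((p n : ℝ) * (2 * Real.exp (-(16 * L)))) := by
            rw [Finset.sum_const, Finset.card_univ, Fintype.card_fin, nsmul_eq_mul]
            push_cast
            ring
        _ = ((K:ℝ)+1) * (p n : ℝ) * (2 * Real.exp (-(16 * L))) := by ring
    -- putting it together
    have hG : 1 - (μ n {ω | ∀ k : Fin (K+1),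
        (∀ j, |∑ i, (empD (X n ω) j i - (A n * W n) j i) * W n k i| ≤
            C * (Real.sqrt (N n : ℝ))⁻¹ *
              Real.sqrt ((n : ℝ) * rowL1 (A n) j * Real.log n)) ∧
        enorm (fun j => (Real.sqrt (diagAvg (A n * W n) j))⁻¹ *
            ∑ i, (empD (X n ω) j i - (A n * W n) j i) * W n k i) ≤
          C * (Real.sqrt (N n : ℝ))⁻¹ *
            Real.sqrt ((n : ℝ) * (p n : ℝ) * Real.log n)}).toReal
        ≤ ((K:ℝ)+1) * (p n : ℝ) * (2 * Real.exp (-(16 * L))) := by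
      set G := {ω | ∀ k : Fin (K+1),
        (∀ j, |∑ i, (empD (X n ω) j i - (A n * W n) j i) * W n k i| ≤
            C * (Real.sqrt (N n : ℝ))⁻¹ *
              Real.sqrt ((n : ℝ) * rowL1 (A n) j * Real.log n)) ∧
        enorm (fun j => (Real.sqrt (diagAvg (A n * W n) j))⁻¹ *
            ∑ i, (empD (X n ω) j i - (A n * W n) j i) * W n k i) ≤
          C * (Real.sqrt (N n : ℝ))⁻¹ *
            Real.sqrt ((n : ℝ) * (p n : ℝ) * Real.log n)} with hGdef
      have h0 : μ n Set.univ ≤ μ n B + μ n G := by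
        refine (measure_mono (fun ω _ => ?_)).trans (measure_union_le B G)
        by_cases hmem : ω ∈ B
        · exact Or.inl hmem
        · exact Or.inr (hsub hmem)
      have h1 := ENNReal.toReal_mono
        (ENNReal.add_ne_top.mpr ⟨measure_ne_top _ _, measure_ne_top _ _⟩) h0
      rw [measure_univ, ENNReal.toReal_one,
        ENNReal.toReal_add (measure_ne_top _ _) (measure_ne_top _ _)] at h1
      linarith [hBbound]
    have hp : (p n : ℝ) ≤ (n:ℝ) := by exact_mod_cast (hle n).2
    have hEpos : (0:ℝ) < Real.exp (-(16 * L)) := Real.exp_pos _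
    calc (n:ℝ)^3 * (1 - (μ n _).toReal)
        ≤ (n:ℝ)^3 * (((K:ℝ)+1) * (p n : ℝ) * (2 * Real.exp (-(16 * L)))) :=
          mul_le_mul_of_nonneg_left hG (by positivity)
      _ = (2 * ((K:ℝ)+1) * Real.exp (-(16 * L))) * ((n:ℝ)^3 * (p n : ℝ)) := by ring
      _ ≤ (2 * ((K:ℝ)+1) * Real.exp (-(16 * L))) * ((n:ℝ)^(4:ℕ)) := by
          refine mul_le_mul_of_nonneg_left ?_ (by positivity)
          calc (n:ℝ)^3 * (p n : ℝ) ≤ (n:ℝ)^3 * (n:ℝ) :=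
                mul_le_mul_of_nonneg_left hp (by positivity)
            _ = (n:ℝ)^(4:ℕ) := by ring
      _ = 2 * ((K:ℝ)+1) * ((n:ℝ)^(4:ℕ) * Real.exp (-(16 * Real.log n))) := by
          rw [hLdef]; ring
  · have h0 : Tendsto (fun n : ℕ => 2 * ((K:ℝ)+1) * (n:ℝ) ^ (-12:ℝ)) atTop (nhds 0) := by
      have h1 := (tendsto_rpow_neg_atTop (by norm_num : (0:ℝ) < 12)).comp
        (tendsto_natCast_atTop_atTop (R := ℝ))
      have h2 := h1.const_mul (2 * ((K:ℝ)+1))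
      simpa using h2
    have hEq : (fun n : ℕ => 2 * ((K:ℝ)+1) * (n:ℝ) ^ (-12:ℝ)) =ᶠ[atTop]
        (fun n : ℕ => 2 * ((K:ℝ)+1) * ((n:ℝ) ^ (4:ℕ) * Real.exp (-(16 * Real.log n)))) := by
      filter_upwards [eventually_ge_atTop 1] with n hn1
      have hn0 : (0:ℝ) < n := by exact_mod_cast hn1
      have e1 : Real.exp (-(16 * Real.log n)) = (n:ℝ) ^ (-16:ℝ) := by
        rw [Real.rpow_def_of_pos hn0]
        congr 1
        ring
      rw [e1, ← Real.rpow_natCast (n:ℝ) 4, ← Real.rpow_add hn0]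
      norm_num
    exact h0.congr' hEq


end TopicModel
end
end
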